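/- arXiv:2101.03816 — 3 statements merged into one kernel-verified Lean document; each statement's English description precedes it below -/
import Mathlib

section
/- Let a>0, m≥1, 1≤p_j<∞ for j=1,…,m and 1/p = Σ_{j=1}^m 1/p_j. Let ν and ω_1,…,ω_m be weights such that (i) sup_{B∈𝓑_a} ((1/γ(B))∫_B ν dγ)^{1/p} · ∏_{j=1}^m ((1/γ(B))∫_B ω_j^{1-p_j'} dγ)^{1/p_j'} < ∞, where for those j with p_j=1 the j-th factor is interpreted as (ess inf_{x∈B} ω_j(x))^{-1}, and (ii) the measure ν dγ satisfies the a-local 5-condition: there is C_0 such that ∫_{5B} ν dγ ≤ C_0 ∫_B ν dγ for all B ∈ 𝓑_a, where 5B is the concentric ball of 5 times the radius. Then there is a constant C such that ‖𝓜_a(f_1,…,f_m)‖_{L^{p,∞}(ℝ^d,γ,ν)} ≤ C ∏_{j=1}^m ‖f_j‖_{L^{p_j}(ℝ^d,γ,ω_j)} for all f_1,…,f_m ∈ L¹_loc(γ). -/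
open MeasureTheory ENNReal Real Set Metric
open scoped Classical

noncomputable section

/-- ℝ^d with the Euclidean norm. -/
abbrev Euc (d : ℕ) := EuclideanSpace ℝ (Fin d)

/-- The Gaussian measure dγ(x) = π^{-d/2} e^{-|x|²} dx. -/
def gaussMeasure (d : ℕ) : Measure (Euc d) :=
  volume.withDensity fun x => ENNReal.ofReal (Real.pi ^ (-(d : ℝ) / 2) * Real.exp (-‖x‖ ^ 2))

/-- m(x) = min(1, 1/|x|) (with value 1 at x = 0). -/
def adm {d : ℕ} (x : Euc d) : ℝ := if ‖x‖ ≤ 1 then 1 else ‖x‖⁻¹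

/-- `B(c,r) ∈ 𝓑_a`: the admissibility condition for a ball of center `c` and radius `r`. -/
def IsAdm {d : ℕ} (a : ℝ) (c : Euc d) (r : ℝ) : Prop := 0 < r ∧ r < a * adm c

/-- The conjugate exponent p' = p/(p-1). -/
def conjExp (p : ℝ) : ℝ := p / (p - 1)

/-- The local multi(sub)linear Hardy–Littlewood maximal operator 𝓜_a on the Gaussian
measure space. -/
def multiMax {d m : ℕ} (a : ℝ) (f : Fin m → Euc d → ℝ) (x : Euc d) : ℝ≥0∞ :=
  ⨆ (c : Euc d) (r : ℝ) (_ : IsAdm a c r) (_ : x ∈ ball c r),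
    ∏ j : Fin m, (gaussMeasure d (ball c r))⁻¹ *
      ∫⁻ y in ball c r, ENNReal.ofReal |f j y| ∂gaussMeasure d

/-- The weighted weak norm ‖g‖_{L^{p,∞}(ℝ^d,γ,ν)} = sup_{λ>0} λ (∫_{{g>λ}} ν dγ)^{1/p}. -/
def weakNorm {d : ℕ} (p : ℝ) (ν : Euc d → ℝ) (g : Euc d → ℝ≥0∞) : ℝ≥0∞ :=
  ⨆ (t : ℝ) (_ : 0 < t),
    ENNReal.ofReal t *
      (∫⁻ x in {x | ENNReal.ofReal t < g x}, ENNReal.ofReal (ν x) ∂gaussMeasure d) ^ (1 / p)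

/-- The weighted Gaussian Lebesgue norm ‖f‖_{L^p(ℝ^d,γ,ω)}. -/
def gLpNorm {d : ℕ} (p : ℝ) (ω : Euc d → ℝ) (f : Euc d → ℝ) : ℝ≥0∞ :=
  (∫⁻ x, ENNReal.ofReal |f x| ^ p * ENNReal.ofReal (ω x) ∂gaussMeasure d) ^ (1 / p)

lemma gauss_apply {d : ℕ} {s : Set (Euc d)} (hs : MeasurableSet s) :
    gaussMeasure d s
      = ∫⁻ x in s, ENNReal.ofReal (Real.pi ^ (-(d : ℝ) / 2) * Real.exp (-‖x‖ ^ 2)) ∂volume := by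
  rw [gaussMeasure, withDensity_apply _ hs]

lemma gauss_ball_pos {d : ℕ} (c : Euc d) {r : ℝ} (hr : 0 < r) :
    gaussMeasure d (ball c r) ≠ 0 := by
  rw [gauss_apply measurableSet_ball]
  have h1 : (0:ℝ) < Real.pi ^ (-(d : ℝ) / 2) * Real.exp (-(‖c‖ + r) ^ 2) := by positivity
  have h2 : ENNReal.ofReal (Real.pi ^ (-(d : ℝ) / 2) * Real.exp (-(‖c‖ + r) ^ 2))
      * volume (ball c r)
      ≤ ∫⁻ x in ball c r, ENNReal.ofReal (Real.pi ^ (-(d : ℝ) / 2) * Real.exp (-‖x‖ ^ 2)) ∂volume := by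
    rw [← setLIntegral_const]
    refine setLIntegral_mono' measurableSet_ball fun x hx => ?_
    refine ENNReal.ofReal_le_ofReal ?_
    refine mul_le_mul_of_nonneg_left ?_ (by positivity)
    refine Real.exp_le_exp.2 (neg_le_neg ?_)
    have hx1 : ‖x‖ ≤ ‖c‖ + r := by
      have := mem_ball_iff_norm.mp hx
      have h3 : ‖x‖ - ‖c‖ ≤ ‖x - c‖ := norm_sub_norm_le x c
      linarith
    have := pow_le_pow_left₀ (norm_nonneg x) hx1 2
    linarith
  intro h0
  rw [h0] at h2
  have := ENNReal.mul_pos (by simp [ENNReal.ofReal_eq_zero]; nlinarith : ENNReal.ofReal (Real.pi ^ (-(d : ℝ) / 2) * Real.exp (-(‖c‖ + r) ^ 2)) ≠ 0) (measure_ball_pos volume c hr).ne'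
  exact absurd (le_antisymm h2 zero_le) this.ne'

lemma gauss_ball_ne_top {d : ℕ} (c : Euc d) (r : ℝ) :
    gaussMeasure d (ball c r) ≠ ⊤ := by
  rw [gauss_apply measurableSet_ball]
  have h2 : ∫⁻ x in ball c r, ENNReal.ofReal (Real.pi ^ (-(d : ℝ) / 2) * Real.exp (-‖x‖ ^ 2)) ∂volume
      ≤ ENNReal.ofReal (Real.pi ^ (-(d : ℝ) / 2)) * volume (ball c r) := by
    rw [← setLIntegral_const]
    refine setLIntegral_mono' measurableSet_ball fun x _ => ?_
    refine ENNReal.ofReal_le_ofReal ?_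
    have h3 : Real.exp (-‖x‖ ^ 2) ≤ 1 := Real.exp_le_one_iff.2 (by nlinarith [sq_nonneg ‖x‖])
    nlinarith [Real.rpow_natCast Real.pi 1, Real.pi_pos,
      Real.rpow_nonneg Real.pi_pos.le (-(d : ℝ) / 2)]
  refine ne_top_of_le_ne_top ?_ h2
  exact ENNReal.mul_ne_top ofReal_ne_top measure_ball_lt_top.ne

lemma gauss_sphere_zero {d : ℕ} (hd : 0 < d) (c : Euc d) (r : ℝ) :
    gaussMeasure d (sphere c r) = 0 := by
  haveI : Nonempty (Fin d) := ⟨⟨0, hd⟩⟩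
  haveI : Nontrivial (Euc d) := by
    refine ⟨EuclideanSpace.single ⟨0, hd⟩ (1:ℝ), 0, fun h => ?_⟩
    have := congrArg (fun v : Euc d => v ⟨0, hd⟩) h
    simpa using this
  have hv : volume (sphere c r) = 0 := Measure.addHaar_sphere volume c r
  exact withDensity_absolutelyContinuous _ _ hv

/-- finite product of rpow with common base. -/
lemma rpow_sum_aux {ι : Type*} (s : Finset ι) (x : ℝ≥0∞) (hx0 : x ≠ 0) (hxt : x ≠ ⊤)
    (y : ι → ℝ) : ∏ i ∈ s, x ^ (y i) = x ^ (∑ i ∈ s, y i) := by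
  classical
  induction s using Finset.induction with
  | empty => simp
  | @insert i s hi ih =>
    rw [Finset.prod_insert hi, Finset.sum_insert hi, ih, ← ENNReal.rpow_add _ _ hx0 hxt]

/-- Hölder inequality for sums over a countable measurable-singleton type. -/
lemma tsum_prod_rpow_le {ι : Type*} [Countable ι] [MeasurableSpace ι]
    [MeasurableSingletonClass ι] {m : ℕ} (X : ι → Fin m → ℝ≥0∞) (θ : Fin m → ℝ)
    (hθ : ∀ j, 0 ≤ θ j) (hθ1 : ∑ j, θ j = 1) :
    ∑' b, ∏ j, X b j ^ θ j ≤ ∏ j, (∑' b, X b j) ^ θ j := by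
  have := ENNReal.lintegral_prod_norm_pow_le (μ := (Measure.count : Measure ι)) Finset.univ
    (f := fun j b => X b j) (fun j _ => (measurable_of_countable _).aemeasurable)
    hθ1 (fun j _ => hθ j)
  simpa [lintegral_count] using this


lemma key_ball {d mm : ℕ} (pp : Fin mm → ℝ) (hpp : ∀ j, 1 ≤ pp j) (p : ℝ)
    (hp0 : 0 < p) (hpsum : (1:ℝ)/p = ∑ j, 1/pp j)
    (ν : Euc d → ℝ) (ω f : Fin mm → Euc d → ℝ)
    (hωm : ∀ j, AEMeasurable (ω j) (gaussMeasure d))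
    (hfm : ∀ j, AEMeasurable (f j) (gaussMeasure d))
    (A : ℝ≥0∞) (hAtop : A ≠ ⊤) (c : Euc d) (r : ℝ) (hr : 0 < r)
    (hGν0 : (∫⁻ x in ball c r, ENNReal.ofReal (ν x) ∂gaussMeasure d) ≠ 0)
    (hGνtop : (∫⁻ x in ball c r, ENNReal.ofReal (ν x) ∂gaussMeasure d) ≠ ⊤)
    (hA : ((gaussMeasure d (ball c r))⁻¹ *
          ∫⁻ x in ball c r, ENNReal.ofReal (ν x) ∂gaussMeasure d) ^ (1 / p) *
        ∏ j : Fin mm,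
          (if pp j = 1 then
            (essInf (fun x => ENNReal.ofReal (ω j x))
              ((gaussMeasure d).restrict (ball c r)))⁻¹
          else
            ((gaussMeasure d (ball c r))⁻¹ *
                ∫⁻ x in ball c r,
                  ENNReal.ofReal (ω j x) ^ (1 - conjExp (pp j)) ∂gaussMeasure d) ^
              (1 / conjExp (pp j))) ≤ A)
    (t : ℝ≥0∞)
    (hlt : t ≤ ∏ j : Fin mm, (gaussMeasure d (ball c r))⁻¹ *
        ∫⁻ y in ball c r, ENNReal.ofReal |f j y| ∂gaussMeasure d) :
    t * (∫⁻ x in ball c r, ENNReal.ofReal (ν x) ∂gaussMeasure d) ^ (1 / p)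
      ≤ A * ∏ j : Fin mm,
          (∫⁻ x in ball c r,
            ENNReal.ofReal |f j x| ^ pp j * ENNReal.ofReal (ω j x) ∂gaussMeasure d) ^ (1 / pp j) := by
  set γ := gaussMeasure d with hγdef
  set B := ball c r with hBdef
  set G := γ B with hGdef
  have hG0 : G ≠ 0 := gauss_ball_pos c hr
  have hGtop : G ≠ ⊤ := gauss_ball_ne_top c r
  set Gν := ∫⁻ x in B, ENNReal.ofReal (ν x) ∂γ with hGνdef
  set D : Fin mm → ℝ≥0∞ := fun j =>
    if pp j = 1 then (essInf (fun x => ENNReal.ofReal (ω j x)) (γ.restrict B))⁻¹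
    else ((G⁻¹ * ∫⁻ x in B, ENNReal.ofReal (ω j x) ^ (1 - conjExp (pp j)) ∂γ) ^
      (1 / conjExp (pp j))) with hDdef
  set K := (G⁻¹ * Gν) ^ (1/p) with hKdef
  have hppos : ∀ j, 0 < pp j := fun j => lt_of_lt_of_le one_pos (hpp j)
  have hbase0 : G⁻¹ * Gν ≠ 0 := mul_ne_zero (ENNReal.inv_ne_zero.mpr hGtop) hGν0
  have hbasetop : G⁻¹ * Gν ≠ ⊤ := ENNReal.mul_ne_top (ENNReal.inv_ne_top.mpr hG0) hGνtop
  have hK0 : K ≠ 0 := by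
    rw [hKdef, Ne, ENNReal.rpow_eq_zero_iff]
    rintro (⟨h, _⟩ | ⟨h, _⟩)
    · exact hbase0 h
    · exact hbasetop h
  have hKtop : K ≠ ⊤ := ENNReal.rpow_ne_top_of_nonneg (by positivity) hbasetop
  haveI hres : Filter.NeBot (ae (γ.restrict B)) := by
    refine ae_neBot.2 fun h => hG0 ?_
    have h2 : γ.restrict B Set.univ = 0 := by rw [h]; simp
    rwa [Measure.restrict_apply_univ] at h2
  have hqgt : ∀ j, pp j ≠ 1 → 1 < conjExp (pp j) := by
    intro j h1
    have h2 : 1 < pp j := lt_of_le_of_ne (hpp j) (Ne.symm h1)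
    rw [conjExp]
    rw [lt_div_iff₀ (by linarith)]
    linarith
  have hDpos : ∀ j, D j ≠ 0 := by
    intro j
    rw [hDdef]
    dsimp only
    split_ifs with h1
    · rw [Ne, ENNReal.inv_eq_zero]
      intro htop
      obtain ⟨x, hx⟩ := (ae_essInf_le (f := fun x => ENNReal.ofReal (ω j x))
        (μ := γ.restrict B)).exists
      rw [htop, top_le_iff] at hx
      exact (ENNReal.ofReal_lt_top (r := ω j x)).ne hx
    · have hq := hqgt j h1
      rw [Ne, ENNReal.rpow_eq_zero_iff]
      rintro (⟨h, _⟩ | ⟨_, h⟩)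
      · rcases mul_eq_zero.mp h with h' | h'
        · exact ENNReal.inv_ne_zero.mpr hGtop h'
        · have hmeas : AEMeasurable
              (fun x => ENNReal.ofReal (ω j x) ^ (1 - conjExp (pp j))) (γ.restrict B) :=
            ((hωm j).restrict.ennreal_ofReal).pow_const _
          rw [lintegral_eq_zero_iff' hmeas] at h'
          obtain ⟨x, hx⟩ := h'.exists
          simp only [Pi.zero_apply] at hx
          rw [ENNReal.rpow_eq_zero_iff] at hx
          rcases hx with ⟨hx1, hx2⟩ | ⟨hx1, _⟩
          · linarith
          · exact (ENNReal.ofReal_lt_top (r := ω j x)).ne hx1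
      · have : (0:ℝ) < 1 / conjExp (pp j) := by positivity
        linarith
  have hprodDtop : ∏ j, D j ≠ ⊤ := by
    intro h
    have h1 : K * ∏ j, D j = ⊤ := by rw [h, ENNReal.mul_top hK0]
    exact hAtop (top_le_iff.mp (h1 ▸ hA))
  have hDtop : ∀ j, D j ≠ ⊤ := by
    intro j hj
    apply hprodDtop
    rw [← Finset.mul_prod_erase _ _ (Finset.mem_univ j), hj, ENNReal.top_mul]
    exact Finset.prod_ne_zero_iff.mpr fun i _ => hDpos i
  -- the main Hölder step
  have hstep : ∀ j, (∫⁻ y in B, ENNReal.ofReal |f j y| ∂γ)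
      ≤ (∫⁻ x in B, ENNReal.ofReal |f j x| ^ pp j * ENNReal.ofReal (ω j x) ∂γ) ^ (1 / pp j)
        * D j * G ^ (1 - 1 / pp j) := by
    intro j
    by_cases h1 : pp j = 1
    · -- p_j = 1 case
      set e := essInf (fun x => ENNReal.ofReal (ω j x)) (γ.restrict B) with hedef
      have hDj : D j = e⁻¹ := by rw [hDdef]; dsimp only; rw [if_pos h1]
      have he0 : e ≠ 0 := by
        intro h
        apply hDtop j
        rw [hDj, h, ENNReal.inv_zero]
      have hetop : e ≠ ⊤ := by
        obtain ⟨x, hx⟩ := (ae_essInf_le (f := fun x => ENNReal.ofReal (ω j x))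
          (μ := γ.restrict B)).exists
        exact fun h => (ENNReal.ofReal_lt_top (r := ω j x)).ne (top_le_iff.mp (h ▸ hx))
      have hmul : e * ∫⁻ y in B, ENNReal.ofReal |f j y| ∂γ
          ≤ ∫⁻ x in B, ENNReal.ofReal |f j x| ^ pp j * ENNReal.ofReal (ω j x) ∂γ := by
        rw [← lintegral_const_mul' _ _ hetop]
        refine lintegral_mono_ae ?_
        filter_upwards [ae_essInf_le (f := fun x => ENNReal.ofReal (ω j x))
          (μ := γ.restrict B)] with x hx
        rw [h1, ENNReal.rpow_one]
        calc e * ENNReal.ofReal |f j x| ≤ ENNReal.ofReal (ω j x) * ENNReal.ofReal |f j x| :=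
              mul_le_mul_left hx _
          _ = ENNReal.ofReal |f j x| * ENNReal.ofReal (ω j x) := mul_comm _ _
      have h2 : (∫⁻ y in B, ENNReal.ofReal |f j y| ∂γ)
          ≤ e⁻¹ * ∫⁻ x in B, ENNReal.ofReal |f j x| ^ pp j * ENNReal.ofReal (ω j x) ∂γ := by
        calc (∫⁻ y in B, ENNReal.ofReal |f j y| ∂γ)
            = e⁻¹ * (e * ∫⁻ y in B, ENNReal.ofReal |f j y| ∂γ) := by
              rw [← mul_assoc, ENNReal.inv_mul_cancel he0 hetop, one_mul]
          _ ≤ _ := mul_le_mul_right hmul _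
      rw [hDj]
      have h3 : (1:ℝ) - 1/pp j = 0 := by rw [h1]; norm_num
      have h4 : (1:ℝ)/pp j = 1 := by rw [h1]; norm_num
      rw [h3, ENNReal.rpow_zero, mul_one, h4, ENNReal.rpow_one, mul_comm]
      exact h2
    · -- p_j > 1 case
      have hpj : 1 < pp j := lt_of_le_of_ne (hpp j) (Ne.symm h1)
      set q := conjExp (pp j) with hqdef
      have hq1 : 1 < q := hqgt j h1
      have hq0 : q ≠ 0 := by linarith
      have hpj0 : pp j ≠ 0 := (hppos j).ne'
      have hconj : (pp j).HolderConjugate q := by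
        rw [Real.holderConjugate_iff]
        constructor
        · exact hpj
        · rw [hqdef, conjExp]
          field_simp
          ring
      set w : Euc d → ℝ≥0∞ := fun x => ENNReal.ofReal (ω j x) with hwdef
      have hwm : AEMeasurable w (γ.restrict B) := (hωm j).restrict.ennreal_ofReal
      set S := ∫⁻ x in B, w x ^ (1 - q) ∂γ with hSdef
      have hDj : D j = (G⁻¹ * S) ^ (1/q) := by rw [hDdef]; dsimp only; rw [if_neg h1]
      have hStop : S ≠ ⊤ := by
        intro h
        apply hDtop j
        rw [hDj, h, ENNReal.mul_top (ENNReal.inv_ne_zero.mpr hGtop),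
          ENNReal.top_rpow_of_pos (by positivity)]
      have hae0 : ∀ᵐ x ∂(γ.restrict B), w x ≠ 0 := by
        filter_upwards [ae_lt_top' (hwm.pow_const (1 - q)) (hSdef ▸ hStop)] with x hx h0
        rw [h0, ENNReal.zero_rpow_of_neg (by linarith)] at hx
        exact (lt_irrefl _ hx)
      have hwtop : ∀ x, w x ≠ ⊤ := fun x => ENNReal.ofReal_lt_top.ne
      -- Hölder
      have hH := ENNReal.lintegral_mul_le_Lp_mul_Lq (γ.restrict B) hconj
        (f := fun x => ENNReal.ofReal |f j x| * w x ^ (1/pp j))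
        (g := fun x => w x ^ (-(1/pp j)))
        ((((continuous_abs.measurable.comp_aemeasurable (hfm j).restrict)).ennreal_ofReal.mul (hwm.pow_const _)))
        (hwm.pow_const _)
      have hle : (∫⁻ y in B, ENNReal.ofReal |f j y| ∂γ)
          ≤ ∫⁻ x in B, (fun x => ENNReal.ofReal |f j x| * w x ^ (1/pp j)) x
              * (fun x => w x ^ (-(1/pp j))) x ∂γ := by
        refine lintegral_mono_ae ?_
        filter_upwards [hae0] with x hx
        rw [mul_assoc, ← ENNReal.rpow_add _ _ hx (hwtop x)]
        simp
      have hfst : (∫⁻ x in B, ((fun x => ENNReal.ofReal |f j x| * w x ^ (1/pp j)) x) ^ pp j ∂γ)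
          = ∫⁻ x in B, ENNReal.ofReal |f j x| ^ pp j * ENNReal.ofReal (ω j x) ∂γ := by
        refine lintegral_congr fun x => ?_
        rw [ENNReal.mul_rpow_of_nonneg _ _ (hppos j).le, ← ENNReal.rpow_mul,
          one_div, inv_mul_cancel₀ hpj0, ENNReal.rpow_one]
      have hsnd : (∫⁻ x in B, ((fun x => w x ^ (-(1/pp j))) x) ^ q ∂γ) = S := by
        rw [hSdef]
        refine lintegral_congr fun x => ?_
        rw [← ENNReal.rpow_mul]
        congr 1
        have h := hconj.inv_add_inv_eq_one
        have h5 : (pp j)⁻¹ = 1 - q⁻¹ := by linarith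
        rw [one_div, h5]
        field_simp
        ring
      have hSq : S ^ (1/q) = D j * G ^ (1/q) := by
        rw [hDj, ← ENNReal.mul_rpow_of_nonneg _ _ (by positivity : (0:ℝ) ≤ 1/q)]
        congr 1
        rw [mul_right_comm, ENNReal.inv_mul_cancel hG0 hGtop, one_mul]
      have hexp : 1 - 1/pp j = 1/q := by
        have h := hconj.inv_add_inv_eq_one
        rw [one_div, one_div]
        linarith
      calc (∫⁻ y in B, ENNReal.ofReal |f j y| ∂γ)
          ≤ ∫⁻ x in B, (fun x => ENNReal.ofReal |f j x| * w x ^ (1/pp j)) x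
              * (fun x => w x ^ (-(1/pp j))) x ∂γ := hle
        _ ≤ (∫⁻ x in B, ((fun x => ENNReal.ofReal |f j x| * w x ^ (1/pp j)) x) ^ pp j ∂γ) ^ (1/pp j)
            * (∫⁻ x in B, ((fun x => w x ^ (-(1/pp j))) x) ^ q ∂γ) ^ (1/q) := hH
        _ = (∫⁻ x in B, ENNReal.ofReal |f j x| ^ pp j * ENNReal.ofReal (ω j x) ∂γ) ^ (1/pp j)
            * (D j * G ^ (1/q)) := by rw [hfst, hsnd, hSq]
        _ = _ := by rw [hexp, mul_assoc]
  -- combine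
  set Xr : Fin mm → ℝ≥0∞ := fun j =>
    (∫⁻ x in B, ENNReal.ofReal |f j x| ^ pp j * ENNReal.ofReal (ω j x) ∂γ) ^ (1 / pp j) with hXr
  have hGfac : ∀ j : Fin mm, G⁻¹ * (Xr j * D j * G ^ (1 - 1/pp j))
      = Xr j * D j * G ^ (-(1/pp j)) := by
    intro j
    have : G⁻¹ * G ^ (1 - 1/pp j) = G ^ (-(1/pp j)) := by
      rw [← ENNReal.rpow_neg_one, ← ENNReal.rpow_add _ _ hG0 hGtop]
      congr 1
      ring
    rw [← this]; ring
  have hsumneg : (∑ j : Fin mm, -(1/pp j)) = -(1/p) := by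
    rw [hpsum, ← Finset.sum_neg_distrib]
  have hprod : (∏ j : Fin mm, (G⁻¹ * (Xr j * D j * G ^ (1 - 1/pp j))))
      = (∏ j, Xr j) * (∏ j, D j) * G ^ (-(1/p)) := by
    rw [Finset.prod_congr rfl fun j _ => hGfac j]
    rw [Finset.prod_mul_distrib, Finset.prod_mul_distrib, rpow_sum_aux _ _ hG0 hGtop, hsumneg]
  have hGK : G ^ (-(1/p)) * Gν ^ (1/p) = K := by
    rw [hKdef, ENNReal.rpow_neg, ← ENNReal.inv_rpow,
      ← ENNReal.mul_rpow_of_nonneg _ _ (by positivity : (0:ℝ) ≤ 1/p)]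
  calc t * Gν ^ (1/p)
      ≤ (∏ j : Fin mm, G⁻¹ * ∫⁻ y in B, ENNReal.ofReal |f j y| ∂γ) * Gν ^ (1/p) :=
        mul_le_mul_left hlt _
    _ ≤ (∏ j : Fin mm, (G⁻¹ * (Xr j * D j * G ^ (1 - 1/pp j)))) * Gν ^ (1/p) := by
        refine mul_le_mul_left (Finset.prod_le_prod' fun j _ => ?_) _
        exact mul_le_mul_right (hstep j) _
    _ = (∏ j, Xr j) * ((∏ j, D j) * (G ^ (-(1/p)) * Gν ^ (1/p))) := by rw [hprod]; ring
    _ = (∏ j, Xr j) * (K * (∏ j, D j)) := by rw [hGK, mul_comm (∏ j, D j) K]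
    _ ≤ (∏ j, Xr j) * A := mul_le_mul_right hA _
    _ = A * ∏ j, Xr j := mul_comm _ _

/-- two-weight weak type estimate for the local multi(sub)linear
Hardy–Littlewood maximal operator on Gaussian measure spaces. -/
theorem stmt0 {d m : ℕ} (hd : 0 < d) (hm : 0 < m) (a : ℝ) (ha : 0 < a)
    (pp : Fin m → ℝ) (hpp : ∀ j, 1 ≤ pp j) (p : ℝ) (hp : 1 / p = ∑ j, 1 / pp j)
    (ν : Euc d → ℝ) (hν0 : 0 ≤ᵐ[gaussMeasure d] ν)
    (hνloc : LocallyIntegrable ν (gaussMeasure d))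
    (ω : Fin m → Euc d → ℝ) (hω0 : ∀ j, 0 ≤ᵐ[gaussMeasure d] ω j)
    (hωloc : ∀ j, LocallyIntegrable (ω j) (gaussMeasure d))
    -- (i) the two-weight condition
    (hAp : (⨆ (c : Euc d) (r : ℝ) (_ : IsAdm a c r),
        ((gaussMeasure d (ball c r))⁻¹ *
            ∫⁻ x in ball c r, ENNReal.ofReal (ν x) ∂gaussMeasure d) ^ (1 / p) *
          ∏ j : Fin m,
            (if pp j = 1 then
              (essInf (fun x => ENNReal.ofReal (ω j x))
                ((gaussMeasure d).restrict (ball c r)))⁻¹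
            else
              ((gaussMeasure d (ball c r))⁻¹ *
                  ∫⁻ x in ball c r,
                    ENNReal.ofReal (ω j x) ^ (1 - conjExp (pp j)) ∂gaussMeasure d) ^
                (1 / conjExp (pp j)))) < ⊤)
    -- (ii) the a-local 5-condition for ν dγ
    (h5 : ∃ C₀ : ℝ≥0∞, C₀ ≠ ⊤ ∧ ∀ (c : Euc d) (r : ℝ), IsAdm a c r →
        (∫⁻ x in ball c (5 * r), ENNReal.ofReal (ν x) ∂gaussMeasure d) ≤
          C₀ * ∫⁻ x in ball c r, ENNReal.ofReal (ν x) ∂gaussMeasure d) :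
    ∃ C : ℝ≥0∞, C ≠ ⊤ ∧ ∀ f : Fin m → Euc d → ℝ,
      (∀ j, LocallyIntegrable (f j) (gaussMeasure d)) →
      weakNorm p ν (multiMax a f) ≤ C * ∏ j : Fin m, gLpNorm (pp j) (ω j) (f j) := by
  classical
  obtain ⟨C₀, hC₀top, hC₀⟩ := h5
  set γ := gaussMeasure d with hγdef
  set A := (⨆ (c : Euc d) (r : ℝ) (_ : IsAdm a c r),
        ((γ (ball c r))⁻¹ *
            ∫⁻ x in ball c r, ENNReal.ofReal (ν x) ∂γ) ^ (1 / p) *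
          ∏ j : Fin m,
            (if pp j = 1 then
              (essInf (fun x => ENNReal.ofReal (ω j x)) (γ.restrict (ball c r)))⁻¹
            else
              ((γ (ball c r))⁻¹ *
                  ∫⁻ x in ball c r,
                    ENNReal.ofReal (ω j x) ^ (1 - conjExp (pp j)) ∂γ) ^
                (1 / conjExp (pp j)))) with hAdef
  haveI : Nonempty (Fin m) := ⟨⟨0, hm⟩⟩
  have hppos : ∀ j, 0 < pp j := fun j => lt_of_lt_of_le one_pos (hpp j)
  have h1p : 0 < 1 / p := by
    rw [hp]
    exact Finset.sum_pos (fun j _ => one_div_pos.mpr (hppos j)) Finset.univ_nonempty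
  have hp0 : 0 < p := by
    rcases lt_trichotomy p 0 with h | h | h
    · exfalso; have : 1 / p < 0 := by exact div_neg_of_pos_of_neg one_pos h
      linarith
    · exfalso; rw [h] at h1p; simp at h1p
    · exact h
  have hωm : ∀ j, AEMeasurable (ω j) γ := fun j =>
    ((hωloc j).aestronglyMeasurable).aemeasurable
  refine ⟨C₀ ^ (1 / p) * A, ?_, ?_⟩
  · exact ENNReal.mul_ne_top (ENNReal.rpow_ne_top_of_nonneg h1p.le hC₀top) hAp.ne
  intro f hf
  have hfm : ∀ j, AEMeasurable (f j) γ := fun j =>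
    ((hf j).aestronglyMeasurable).aemeasurable
  rw [weakNorm]
  refine iSup_le fun t => iSup_le fun ht => ?_
  set N : Fin m → ℝ≥0∞ :=
    fun j => ∫⁻ x, ENNReal.ofReal |f j x| ^ pp j * ENNReal.ofReal (ω j x) ∂γ with hNdef
  -- the family of balls
  set T : Set (Euc d × ℝ) := {b | IsAdm a b.1 b.2 ∧ ENNReal.ofReal t <
    ∏ j : Fin m, (γ (ball b.1 b.2))⁻¹ *
      ∫⁻ y in ball b.1 b.2, ENNReal.ofReal |f j y| ∂γ} with hTdef
  have hradle : ∀ b ∈ T, b.2 ≤ a := by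
    rintro ⟨c, r⟩ ⟨⟨hr0, hra⟩, -⟩
    have hadm1 : adm c ≤ 1 := by
      rw [adm]
      split_ifs with h
      · exact le_rfl
      · push_neg at h
        exact inv_le_one_of_one_le₀ h.le
    nlinarith
  obtain ⟨u, huT, hdisj, hcov⟩ :=
    Vitali.exists_disjoint_subfamily_covering_enlargement_closedBall T Prod.fst Prod.snd a
      hradle 5 (by norm_num)
  have hucnt : u.Countable := by
    refine hdisj.countable_of_nonempty_interior fun b hb => ?_
    have hr0 : 0 < b.2 := ((huT hb).1).1
    exact ⟨b.1, ball_subset_interior_closedBall (mem_ball_self hr0)⟩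
  haveI : Countable ↥u := hucnt.to_subtype
  -- covering of the superlevel set
  have hEsub : {x | ENNReal.ofReal t < multiMax a f x} ⊆ ⋃ b ∈ u, closedBall b.1 (5 * b.2) := by
    intro x hx
    simp only [mem_setOf_eq, multiMax, lt_iSup_iff] at hx
    obtain ⟨c, r, hadm, hxball, hlt⟩ := hx
    obtain ⟨b, hbu, hsub⟩ := hcov (c, r) ⟨hadm, hlt⟩
    exact mem_biUnion hbu (hsub (ball_subset_closedBall hxball))
  set μν := γ.withDensity (fun x => ENNReal.ofReal (ν x)) with hμνdef
  have hμν : ∀ s : Set (Euc d), MeasurableSet s →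
      μν s = ∫⁻ x in s, ENNReal.ofReal (ν x) ∂γ := fun s hs => withDensity_apply _ hs
  have hEle : (∫⁻ x in {x | ENNReal.ofReal t < multiMax a f x}, ENNReal.ofReal (ν x) ∂γ)
      ≤ ∑' b : u, μν (closedBall (b : Euc d × ℝ).1 (5 * (b : Euc d × ℝ).2)) := by
    calc (∫⁻ x in {x | ENNReal.ofReal t < multiMax a f x}, ENNReal.ofReal (ν x) ∂γ)
        ≤ ∫⁻ x in ⋃ b ∈ u, closedBall b.1 (5 * b.2), ENNReal.ofReal (ν x) ∂γ :=
          lintegral_mono_set hEsub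
      _ = μν (⋃ b ∈ u, closedBall b.1 (5 * b.2)) :=
          (hμν _ (MeasurableSet.biUnion hucnt fun _ _ => measurableSet_closedBall)).symm
      _ ≤ ∑' b : u, μν (closedBall (b : Euc d × ℝ).1 (5 * (b : Euc d × ℝ).2)) :=
          measure_biUnion_le μν hucnt _
  have hcb : ∀ b ∈ u, μν (closedBall (b : Euc d × ℝ).1 (5 * (b : Euc d × ℝ).2))
      ≤ C₀ * ∫⁻ x in ball b.1 b.2, ENNReal.ofReal (ν x) ∂γ := by
    intro b hb
    have hadm : IsAdm a b.1 b.2 := (huT hb).1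
    have h1 : μν (closedBall b.1 (5 * b.2))
        ≤ μν (ball b.1 (5 * b.2)) + μν (sphere b.1 (5 * b.2)) := by
      rw [← ball_union_sphere]; exact measure_union_le _ _
    have h2 : μν (sphere b.1 (5 * b.2)) = 0 :=
      (withDensity_absolutelyContinuous γ _) (gauss_sphere_zero hd _ _)
    rw [h2, add_zero] at h1
    refine h1.trans ?_
    rw [hμν _ measurableSet_ball]
    exact hC₀ b.1 b.2 hadm
  -- the per-ball estimate
  have hkey : ∀ b ∈ u, (ENNReal.ofReal t) *
      (∫⁻ x in ball (b : Euc d × ℝ).1 (b : Euc d × ℝ).2, ENNReal.ofReal (ν x) ∂γ) ^ (1 / p)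
      ≤ A * ∏ j : Fin m, (∫⁻ x in ball b.1 b.2,
          ENNReal.ofReal |f j x| ^ pp j * ENNReal.ofReal (ω j x) ∂γ) ^ (1 / pp j) := by
    intro b hb
    obtain ⟨hadm, hlt⟩ := huT hb
    by_cases h0 : (∫⁻ x in ball b.1 b.2, ENNReal.ofReal (ν x) ∂γ) = 0
    · rw [h0, ENNReal.zero_rpow_of_pos h1p, mul_zero]; exact zero_le
    · have hνtop : (∫⁻ x in ball b.1 b.2, ENNReal.ofReal (ν x) ∂γ) ≠ ⊤ := by
        have hint : IntegrableOn ν (closedBall b.1 b.2) γ :=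
          hνloc.integrableOn_isCompact (isCompact_closedBall _ _)
        exact ((hint.mono_set ball_subset_closedBall).lintegral_lt_top).ne
      have hA' : ((γ (ball b.1 b.2))⁻¹ *
            ∫⁻ x in ball b.1 b.2, ENNReal.ofReal (ν x) ∂γ) ^ (1 / p) *
          ∏ j : Fin m,
            (if pp j = 1 then
              (essInf (fun x => ENNReal.ofReal (ω j x)) (γ.restrict (ball b.1 b.2)))⁻¹
            else
              ((γ (ball b.1 b.2))⁻¹ *
                  ∫⁻ x in ball b.1 b.2,
                    ENNReal.ofReal (ω j x) ^ (1 - conjExp (pp j)) ∂γ) ^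
                (1 / conjExp (pp j))) ≤ A := by
        rw [hAdef]
        exact le_iSup_of_le b.1 (le_iSup_of_le b.2 (le_iSup_of_le hadm le_rfl))
      exact key_ball pp hpp p hp0 hp ν ω f hωm hfm A hAp.ne b.1 b.2 hadm.1 h0 hνtop hA' _ hlt.le
  -- raise to the p-th power
  set θ : Fin m → ℝ := fun j => 1 / pp j * p with hθdef
  have hθpos : ∀ j, 0 ≤ θ j := fun j => mul_nonneg (one_div_nonneg.mpr (hppos j).le) hp0.le
  have hθsum : ∑ j, θ j = 1 := by
    rw [hθdef]
    rw [← Finset.sum_mul, ← hp, one_div, inv_mul_cancel₀ hp0.ne']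
  set X : Fin m → ℝ≥0∞ → ℝ≥0∞ := fun j z => z with hXdef -- dummy
  have hkeyp : ∀ b ∈ u, (ENNReal.ofReal t) ^ p *
      (∫⁻ x in ball (b : Euc d × ℝ).1 (b : Euc d × ℝ).2, ENNReal.ofReal (ν x) ∂γ)
      ≤ A ^ p * ∏ j : Fin m, (∫⁻ x in ball b.1 b.2,
          ENNReal.ofReal |f j x| ^ pp j * ENNReal.ofReal (ω j x) ∂γ) ^ θ j := by
    intro b hb
    have h := ENNReal.rpow_le_rpow (hkey b hb) hp0.le
    rw [ENNReal.mul_rpow_of_nonneg _ _ hp0.le, ← ENNReal.rpow_mul,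
      one_div, inv_mul_cancel₀ hp0.ne', ENNReal.rpow_one,
      ENNReal.mul_rpow_of_nonneg _ _ hp0.le, ← ENNReal.prod_rpow_of_nonneg hp0.le] at h
    convert h using 3 with j
    rw [← ENNReal.rpow_mul]
  -- sum up
  have hsumX : ∀ j : Fin m, (∑' b : u, ∫⁻ x in ball (b : Euc d × ℝ).1 (b : Euc d × ℝ).2,
      ENNReal.ofReal |f j x| ^ pp j * ENNReal.ofReal (ω j x) ∂γ) ≤ N j := by
    intro j
    set μj := γ.withDensity (fun x => ENNReal.ofReal |f j x| ^ pp j * ENNReal.ofReal (ω j x))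
      with hμjdef
    have hap : ∀ b : u, (∫⁻ x in ball (b : Euc d × ℝ).1 (b : Euc d × ℝ).2,
        ENNReal.ofReal |f j x| ^ pp j * ENNReal.ofReal (ω j x) ∂γ)
        = μj (ball (b : Euc d × ℝ).1 (b : Euc d × ℝ).2) :=
      fun b => (withDensity_apply _ measurableSet_ball).symm
    calc (∑' b : u, ∫⁻ x in ball (b : Euc d × ℝ).1 (b : Euc d × ℝ).2,
          ENNReal.ofReal |f j x| ^ pp j * ENNReal.ofReal (ω j x) ∂γ)
        = ∑' b : u, μj (ball (b : Euc d × ℝ).1 (b : Euc d × ℝ).2) := by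
          exact tsum_congr hap
      _ = μj (⋃ b ∈ u, ball b.1 b.2) := by
          refine (measure_biUnion hucnt ?_ fun b hb => measurableSet_ball).symm
          exact hdisj.mono fun b => ball_subset_closedBall
      _ ≤ μj Set.univ := measure_mono (subset_univ _)
      _ = N j := by
          rw [hμjdef, withDensity_apply _ MeasurableSet.univ, Measure.restrict_univ]
  have hbig : (ENNReal.ofReal t) ^ p *
      (∫⁻ x in {x | ENNReal.ofReal t < multiMax a f x}, ENNReal.ofReal (ν x) ∂γ)
      ≤ C₀ * A ^ p * ∏ j : Fin m, N j ^ θ j := by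
    calc (ENNReal.ofReal t) ^ p *
        (∫⁻ x in {x | ENNReal.ofReal t < multiMax a f x}, ENNReal.ofReal (ν x) ∂γ)
        ≤ (ENNReal.ofReal t) ^ p *
          ∑' b : u, μν (closedBall (b : Euc d × ℝ).1 (5 * (b : Euc d × ℝ).2)) :=
          mul_le_mul_right hEle _
      _ ≤ (ENNReal.ofReal t) ^ p * ∑' b : u,
          C₀ * ∫⁻ x in ball (b : Euc d × ℝ).1 (b : Euc d × ℝ).2, ENNReal.ofReal (ν x) ∂γ :=
          mul_le_mul_right (ENNReal.tsum_le_tsum fun (b : ↥u) => hcb b.1 b.2) _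
      _ = C₀ * ∑' b : u, (ENNReal.ofReal t) ^ p *
          ∫⁻ x in ball (b : Euc d × ℝ).1 (b : Euc d × ℝ).2, ENNReal.ofReal (ν x) ∂γ := by
          rw [ENNReal.tsum_mul_left, ENNReal.tsum_mul_left, ← mul_assoc,
            mul_comm ((ENNReal.ofReal t) ^ p) C₀, mul_assoc]
      _ ≤ C₀ * ∑' b : u, (A ^ p * ∏ j : Fin m, (∫⁻ x in ball (b : Euc d × ℝ).1 (b : Euc d × ℝ).2,
          ENNReal.ofReal |f j x| ^ pp j * ENNReal.ofReal (ω j x) ∂γ) ^ θ j) :=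
          mul_le_mul_right (ENNReal.tsum_le_tsum fun (b : ↥u) => hkeyp b.1 b.2) _
      _ = C₀ * A ^ p * ∑' b : u, ∏ j : Fin m, (∫⁻ x in ball (b : Euc d × ℝ).1 (b : Euc d × ℝ).2,
          ENNReal.ofReal |f j x| ^ pp j * ENNReal.ofReal (ω j x) ∂γ) ^ θ j := by
          rw [ENNReal.tsum_mul_left, mul_assoc]
      _ ≤ C₀ * A ^ p * ∏ j : Fin m, (∑' b : u, ∫⁻ x in ball (b : Euc d × ℝ).1 (b : Euc d × ℝ).2,
          ENNReal.ofReal |f j x| ^ pp j * ENNReal.ofReal (ω j x) ∂γ) ^ θ j :=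
          mul_le_mul_right (tsum_prod_rpow_le _ _ hθpos hθsum) _
      _ ≤ C₀ * A ^ p * ∏ j : Fin m, N j ^ θ j := by
          refine mul_le_mul_right (Finset.prod_le_prod' fun j _ => ?_) _
          exact ENNReal.rpow_le_rpow (hsumX j) (hθpos j)
  -- take p-th roots
  have hfinal := ENNReal.rpow_le_rpow hbig h1p.le
  rw [ENNReal.mul_rpow_of_nonneg _ _ h1p.le, ← ENNReal.rpow_mul,
    mul_one_div, div_self hp0.ne', ENNReal.rpow_one,
    ENNReal.mul_rpow_of_nonneg _ _ h1p.le, ENNReal.mul_rpow_of_nonneg _ _ h1p.le,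
    ← ENNReal.rpow_mul, mul_one_div, div_self hp0.ne', ENNReal.rpow_one,
    ← ENNReal.prod_rpow_of_nonneg h1p.le] at hfinal
  have hNeq : ∀ j : Fin m, (N j ^ θ j) ^ (1 / p) = gLpNorm (pp j) (ω j) (f j) := by
    intro j
    rw [← ENNReal.rpow_mul]
    have hexp : θ j * (1 / p) = 1 / pp j := by
      rw [hθdef]
      dsimp only
      rw [mul_one_div, mul_div_assoc, div_self hp0.ne', mul_one]
    rw [hexp]
    rfl
  refine hfinal.trans (le_of_eq ?_)
  rw [Finset.prod_congr rfl fun j _ => hNeq j]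
end
end

section
/- Let a>0, β∈(0,1), m≥1, p_j>1 for j=1,…,m with 1/s = Σ_{j=1}^m 1/p_j, and θ_1,…,θ_m > 0. Then for every collection of bounded compactly supported functions f_1,…,f_m and every x ∈ ℝ^d: |I_{β,θ,m}^a(f_1,…,f_m)(x)| ≤ (∏_{j=1}^m θ_j^{-dβs/p_j}) · ∏_{j=1}^m [I_β^{θ_j a}(|f_j|^{p_j/s})(x)]^{s/p_j}. -/
open MeasureTheory ENNReal Real Set Metric
open scoped Classical

noncomputable section

/-- The (radial form of the) local fractional integral operator
I_β^a(f)(x) = π^{-d/2} e^{-β|x|²} ∫_{B(0,a m(x))} f(x-y) |y|^{dβ-d} dy. -/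
def Ifrac {d : ℕ} (a β : ℝ) (f : Euc d → ℝ) (x : Euc d) : ℝ :=
  Real.pi ^ (-(d : ℝ) / 2) * Real.exp (-β * ‖x‖ ^ 2) *
    ∫ y in ball (0 : Euc d) (a * adm x), f (x - y) * ‖y‖ ^ ((d : ℝ) * β - d)

/-- The local m-linear fractional integral operator
I_{β,θ,m}^a(f₁,…,f_m)(x) = π^{-d/2} e^{-β|x|²} ∫_{B(0,a m(x))} (∏ⱼ fⱼ(x-θⱼy)) |y|^{dβ-d} dy. -/
def IfracMulti {d m : ℕ} (a β : ℝ) (θ : Fin m → ℝ) (f : Fin m → Euc d → ℝ)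
    (x : Euc d) : ℝ :=
  Real.pi ^ (-(d : ℝ) / 2) * Real.exp (-β * ‖x‖ ^ 2) *
    ∫ y in ball (0 : Euc d) (a * adm x),
      (∏ j : Fin m, f j (x - θ j • y)) * ‖y‖ ^ ((d : ℝ) * β - d)

lemma lint_norm_rpow_ball_lt_top {d : ℕ} {c : ℝ} (hc1 : -(d:ℝ) < c) (hc0 : c < 0)
    (r : ℝ) : ∫⁻ z in ball (0 : Euc d) r, ENNReal.ofReal (‖z‖ ^ c) < ∞ := by
  have hfr : Module.finrank ℝ (Euc d) = d := finrank_euclideanSpace_fin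
  set μ := volume.restrict (ball (0 : Euc d) r) with hμ
  have hmble : AEMeasurable (fun z : Euc d => ‖z‖ ^ c) μ :=
    (by fun_prop : Measurable fun z : Euc d => ‖z‖ ^ c).aemeasurable
  have hnn : 0 ≤ᵐ[μ] fun z : Euc d => ‖z‖ ^ c :=
    .of_forall fun z => Real.rpow_nonneg (norm_nonneg _) _
  rw [lintegral_eq_lintegral_meas_le μ hnn hmble]
  have hB : volume (ball (0 : Euc d) 1 : Set (Euc d)) < ∞ := measure_ball_lt_top
  have hBr : volume (ball (0 : Euc d) r : Set (Euc d)) < ∞ := measure_ball_lt_top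
  have hexp : (d : ℝ) / c < -1 := by
    rw [div_lt_iff_of_neg hc0]; linarith
  calc ∫⁻ t in Ioi (0:ℝ), μ {a : Euc d | t ≤ ‖a‖ ^ c}
      ≤ ∫⁻ t in Ioc (0:ℝ) 1 ∪ Ioi 1, μ {a : Euc d | t ≤ ‖a‖ ^ c} :=
        lintegral_mono_set Ioi_subset_Ioc_union_Ioi
    _ ≤ (∫⁻ t in Ioc (0:ℝ) 1, μ {a : Euc d | t ≤ ‖a‖ ^ c})
        + ∫⁻ t in Ioi (1:ℝ), μ {a : Euc d | t ≤ ‖a‖ ^ c} :=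
        lintegral_union_le _ _ _
    _ < ∞ := by
        refine ENNReal.add_lt_top.2 ⟨?_, ?_⟩
        · calc (∫⁻ t in Ioc (0:ℝ) 1, μ {a : Euc d | t ≤ ‖a‖ ^ c})
              ≤ ∫⁻ _t in Ioc (0:ℝ) 1, volume (ball (0 : Euc d) r) := by
                refine lintegral_mono fun t => ?_
                refine le_trans (measure_mono (subset_univ _)) ?_
                rw [hμ, Measure.restrict_apply_univ]
            _ = volume (ball (0 : Euc d) r) * volume (Ioc (0:ℝ) 1) := setLIntegral_const _ _
            _ < ∞ := ENNReal.mul_lt_top hBr measure_Ioc_lt_top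
        · have key : ∀ t ∈ Ioi (1:ℝ), μ {a : Euc d | t ≤ ‖a‖ ^ c}
              ≤ ENNReal.ofReal (t ^ ((d:ℝ) / c)) * volume (ball (0 : Euc d) 1) := by
            intro t ht
            have ht1 : (1:ℝ) < t := ht
            have ht0 : (0:ℝ) < t := zero_lt_one.trans ht1
            have hsub : {a : Euc d | t ≤ ‖a‖ ^ c} ⊆ closedBall (0 : Euc d) (t ^ c⁻¹) := by
              intro a ha
              simp only [mem_setOf_eq] at ha
              rcases eq_or_ne a 0 with rfl | h0
              · rw [norm_zero, Real.zero_rpow hc0.ne] at ha; linarith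
              · have h0' : 0 < ‖a‖ := norm_pos_iff.mpr h0
                rw [mem_closedBall_zero_iff]
                exact (Real.le_rpow_inv_iff_of_neg h0' ht0 hc0).mpr ha
            calc μ {a : Euc d | t ≤ ‖a‖ ^ c}
                ≤ volume ({a : Euc d | t ≤ ‖a‖ ^ c} ∩ ball (0 : Euc d) r) :=
                  (Measure.restrict_apply' measurableSet_ball).le
              _ ≤ volume (closedBall (0 : Euc d) (t ^ c⁻¹)) :=
                  measure_mono fun a haa => hsub haa.1
              _ = ENNReal.ofReal ((t ^ c⁻¹) ^ Module.finrank ℝ (Euc d)) *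
                  volume (ball (0 : Euc d) 1) :=
                  Measure.addHaar_closedBall _ _ (Real.rpow_nonneg ht0.le _)
              _ = ENNReal.ofReal (t ^ ((d:ℝ) / c)) * volume (ball (0 : Euc d) 1) := by
                  rw [hfr, ← Real.rpow_natCast (t ^ c⁻¹) d, ← Real.rpow_mul ht0.le]
                  congr 2
                  rw [div_eq_mul_inv, mul_comm]
          calc ∫⁻ t in Ioi (1:ℝ), μ {a : Euc d | t ≤ ‖a‖ ^ c}
              ≤ ∫⁻ t in Ioi (1:ℝ), ENNReal.ofReal (t ^ ((d:ℝ) / c)) *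
                  volume (ball (0 : Euc d) 1) :=
                setLIntegral_mono' measurableSet_Ioi key
            _ = (∫⁻ t in Ioi (1:ℝ), ENNReal.ofReal (t ^ ((d:ℝ) / c))) *
                  volume (ball (0 : Euc d) 1) :=
                lintegral_mul_const' _ _ hB.ne
            _ < ∞ := ENNReal.mul_lt_top
                ((integrableOn_Ioi_rpow_of_lt hexp zero_lt_one).setLIntegral_lt_top) hB

lemma scale_lint {d : ℕ} (h : Euc d → ℝ≥0∞) (hh : Measurable h) {θ : ℝ} (hθ : 0 < θ) (R : ℝ) :
    ∫⁻ y in ball (0 : Euc d) R, h (θ • y)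
      = ENNReal.ofReal ((θ ^ d)⁻¹) * ∫⁻ z in ball (0 : Euc d) (θ * R), h z := by
  have hfr : Module.finrank ℝ (Euc d) = d := finrank_euclideanSpace_fin
  have hmem : ∀ y : Euc d, y ∈ ball (0 : Euc d) R ↔ θ • y ∈ ball (0 : Euc d) (θ * R) := by
    intro y
    simp only [mem_ball_zero_iff, norm_smul, Real.norm_eq_abs, abs_of_pos hθ]
    exact (mul_lt_mul_iff_right₀ hθ).symm
  have hind : ∀ y : Euc d, (ball (0 : Euc d) R).indicator (fun y => h (θ • y)) y
      = (ball (0 : Euc d) (θ * R)).indicator h (θ • y) := by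
    intro y
    by_cases hy : y ∈ ball (0 : Euc d) R
    · rw [indicator_of_mem hy, indicator_of_mem ((hmem y).mp hy)]
    · rw [indicator_of_notMem hy, indicator_of_notMem (fun hc => hy ((hmem y).mpr hc))]
  have hg : Measurable ((ball (0 : Euc d) (θ * R)).indicator h) :=
    hh.indicator measurableSet_ball
  have hsm : Measurable fun y : Euc d => θ • y := measurable_id.const_smul θ
  calc ∫⁻ y in ball (0 : Euc d) R, h (θ • y)
      = ∫⁻ y, (ball (0 : Euc d) R).indicator (fun y => h (θ • y)) y :=
        (lintegral_indicator measurableSet_ball _).symm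
    _ = ∫⁻ y, (ball (0 : Euc d) (θ * R)).indicator h (θ • y) := lintegral_congr hind
    _ = ∫⁻ z, (ball (0 : Euc d) (θ * R)).indicator h z
          ∂(Measure.map (fun y : Euc d => θ • y) volume) :=
        (lintegral_map hg hsm).symm
    _ = ENNReal.ofReal ((θ ^ d)⁻¹) * ∫⁻ z in ball (0 : Euc d) (θ * R), h z := by
        rw [Measure.map_addHaar_smul volume hθ.ne', lintegral_smul_measure,
          lintegral_indicator measurableSet_ball, hfr,
          abs_of_nonneg (inv_nonneg.2 (pow_nonneg hθ.le _)), smul_eq_mul]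

/-- pointwise bound of the local multilinear fractional integral by a product
of local fractional integrals. -/
theorem stmt6 {d m : ℕ} (hd : 0 < d) (hm : 0 < m) (a : ℝ) (ha : 0 < a)
    (β : ℝ) (hβ : β ∈ Ioo (0 : ℝ) 1)
    (pp : Fin m → ℝ) (hpp : ∀ j, 1 < pp j) (s : ℝ) (hs : 1 / s = ∑ j, 1 / pp j)
    (θ : Fin m → ℝ) (hθ : ∀ j, 0 < θ j)
    (f : Fin m → Euc d → ℝ) (hfm : ∀ j, Measurable (f j))
    (hfc : ∀ j, HasCompactSupport (f j)) (hfb : ∀ j, ∃ M : ℝ, ∀ x, |f j x| ≤ M)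
    (x : Euc d) :
    |IfracMulti a β θ f x| ≤
      (∏ j : Fin m, θ j ^ (-(d : ℝ) * β * s / pp j)) *
        ∏ j : Fin m,
          (Ifrac (θ j * a) β (fun y => |f j y| ^ (pp j / s)) x) ^ (s / pp j) := by
  obtain ⟨hβ0, hβ1⟩ := hβ
  have hd' : (0:ℝ) < d := Nat.cast_pos.mpr hd
  have hppos : ∀ j, 0 < pp j := fun j => lt_trans one_pos (hpp j)
  have hNe : Nonempty (Fin m) := ⟨⟨0, hm⟩⟩
  have hsumpos : 0 < ∑ j, 1 / pp j :=
    Finset.sum_pos (fun j _ => one_div_pos.mpr (hppos j)) Finset.univ_nonempty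
  have hs0 : 0 < s := by
    have h1 : 0 < 1 / s := hs ▸ hsumpos
    exact (one_div_pos).mp h1
  have htpos : ∀ j, 0 < s / pp j := fun j => div_pos hs0 (hppos j)
  have htsum : ∑ j, s / pp j = 1 := by
    simp_rw [div_eq_mul_one_div s]
    rw [← Finset.mul_sum, ← hs]
    field_simp
  have hqt : ∀ j, pp j / s * (s / pp j) = 1 := fun j => by
    field_simp
    exact div_self (hppos j).ne'
  set c : ℝ := (d:ℝ) * β - d with hc
  have hc0 : c < 0 := by rw [hc]; nlinarith
  have hc1 : -(d:ℝ) < c := by rw [hc]; nlinarith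
  set R : ℝ := a * adm x with hRdef
  have hadm : 0 < adm x := by
    unfold adm; split_ifs with h
    · exact one_pos
    · exact inv_pos.mpr (lt_trans one_pos (lt_of_not_ge h))
  have hR0 : 0 < R := mul_pos ha hadm
  set C : ℝ := Real.pi ^ (-(d:ℝ)/2) * Real.exp (-β * ‖x‖^2) with hCdef
  have hC0 : 0 < C := by rw [hCdef]; positivity
  -- measurability
  have hk : ∀ j, Measurable fun z : Euc d => |f j (x - z)| ^ (pp j / s) * ‖z‖ ^ c := by
    intro j
    have h1 : Measurable fun z : Euc d => f j (x - z) :=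
      (hfm j).comp (measurable_const.sub measurable_id)
    fun_prop
  have hG : ∀ j, Measurable fun y : Euc d => |f j (x - θ j • y)| ^ (pp j / s) * ‖y‖ ^ c := by
    intro j
    have h1 : Measurable fun y : Euc d => f j (x - θ j • y) :=
      (hfm j).comp (measurable_const.sub (measurable_id.const_smul (θ j)))
    fun_prop
  have hF : Measurable fun y : Euc d => (∏ j, f j (x - θ j • y)) * ‖y‖ ^ c := by
    have h1 : Measurable fun y : Euc d => ∏ j, f j (x - θ j • y) :=
      Finset.measurable_prod Finset.univ fun j _ =>
        (hfm j).comp (measurable_const.sub (measurable_id.const_smul (θ j)))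
    fun_prop
  -- the one-dimensional pieces
  set L : Fin m → ℝ≥0∞ := fun j =>
    ∫⁻ z in ball (0 : Euc d) (θ j * R),
      ENNReal.ofReal (|f j (x - z)| ^ (pp j / s) * ‖z‖ ^ c) with hLdef
  have hLfin : ∀ j, L j < ∞ := by
    intro j
    obtain ⟨M, hM⟩ := hfb j
    have hM0 : 0 ≤ M := le_trans (abs_nonneg _) (hM 0)
    calc L j ≤ ∫⁻ z in ball (0 : Euc d) (θ j * R),
          ENNReal.ofReal (M ^ (pp j / s)) * ENNReal.ofReal (‖z‖ ^ c) := by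
          refine lintegral_mono fun z => ?_
          rw [← ENNReal.ofReal_mul (by positivity)]
          refine ENNReal.ofReal_le_ofReal ?_
          have h2 : |f j (x - z)| ^ (pp j / s) ≤ M ^ (pp j / s) :=
            Real.rpow_le_rpow (abs_nonneg _) (hM _) (div_pos (hppos j) hs0).le
          exact mul_le_mul_of_nonneg_right h2 (Real.rpow_nonneg (norm_nonneg _) _)
      _ = ENNReal.ofReal (M ^ (pp j / s)) *
            ∫⁻ z in ball (0 : Euc d) (θ j * R), ENNReal.ofReal (‖z‖ ^ c) :=
          lintegral_const_mul' _ _ ENNReal.ofReal_ne_top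
      _ < ∞ := ENNReal.mul_lt_top ENNReal.ofReal_lt_top
          (lint_norm_rpow_ball_lt_top hc1 hc0 _)
  have hIfrac : ∀ j, Ifrac (θ j * a) β (fun y => |f j y| ^ (pp j / s)) x
      = C * (L j).toReal := by
    intro j
    have hrad : θ j * a * adm x = θ j * R := by rw [hRdef]; ring
    simp only [Ifrac]
    rw [hrad, ← hc, ← hCdef]
    congr 1
    rw [hLdef]
    exact integral_eq_lintegral_of_nonneg_ae
      (.of_forall fun y => by positivity) ((hk j).aestronglyMeasurable)
  have hscale : ∀ j, (∫⁻ y in ball (0 : Euc d) R,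
      ENNReal.ofReal (|f j (x - θ j • y)| ^ (pp j / s) * ‖y‖ ^ c))
      = ENNReal.ofReal (θ j ^ (-((d:ℝ) * β))) * L j := by
    intro j
    have hθj := hθ j
    have hmain := scale_lint (d := d)
      (fun z => ENNReal.ofReal (|f j (x - z)| ^ (pp j / s) * ‖z‖ ^ c))
      (ENNReal.measurable_ofReal.comp (hk j)) hθj R
    have hpt : ∀ y : Euc d,
        ENNReal.ofReal (|f j (x - θ j • y)| ^ (pp j / s) * ‖θ j • y‖ ^ c)
        = ENNReal.ofReal (θ j ^ c) *
          ENNReal.ofReal (|f j (x - θ j • y)| ^ (pp j / s) * ‖y‖ ^ c) := by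
      intro y
      rw [← ENNReal.ofReal_mul (Real.rpow_nonneg hθj.le _)]
      congr 1
      rw [norm_smul, Real.norm_eq_abs, abs_of_pos hθj,
        Real.mul_rpow hθj.le (norm_nonneg _)]
      ring
    simp only [hpt] at hmain
    rw [lintegral_const_mul' _ _ ENNReal.ofReal_ne_top] at hmain
    have hcancel : ENNReal.ofReal (θ j ^ (-c)) * ENNReal.ofReal (θ j ^ c) = 1 := by
      rw [← ENNReal.ofReal_mul (Real.rpow_nonneg hθj.le _), ← Real.rpow_add hθj]
      norm_num
    calc (∫⁻ y in ball (0 : Euc d) R,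
          ENNReal.ofReal (|f j (x - θ j • y)| ^ (pp j / s) * ‖y‖ ^ c))
        = ENNReal.ofReal (θ j ^ (-c)) * (ENNReal.ofReal (θ j ^ c) *
            ∫⁻ y in ball (0 : Euc d) R,
              ENNReal.ofReal (|f j (x - θ j • y)| ^ (pp j / s) * ‖y‖ ^ c)) := by
          rw [← mul_assoc, hcancel, one_mul]
      _ = ENNReal.ofReal (θ j ^ (-c)) * (ENNReal.ofReal ((θ j ^ d)⁻¹) * L j) := by
          rw [hmain]
      _ = ENNReal.ofReal (θ j ^ (-((d:ℝ) * β))) * L j := by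
          rw [← mul_assoc, ← ENNReal.ofReal_mul (Real.rpow_nonneg hθj.le _)]
          congr 2
          rw [← Real.rpow_natCast (θ j) d, ← Real.rpow_neg hθj.le, ← Real.rpow_add hθj]
          congr 1
          rw [hc]; ring
  -- pointwise identity and Hölder
  have hpointwise : ∀ y : Euc d,
      ENNReal.ofReal |(∏ j, f j (x - θ j • y)) * ‖y‖ ^ c|
        = ∏ j, (ENNReal.ofReal
            (|f j (x - θ j • y)| ^ (pp j / s) * ‖y‖ ^ c)) ^ (s / pp j) := by
    intro y
    have habs : |(∏ j, f j (x - θ j • y)) * ‖y‖ ^ c|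
        = (∏ j, |f j (x - θ j • y)|) * ‖y‖ ^ c := by
      rw [abs_mul, abs_of_nonneg (Real.rpow_nonneg (norm_nonneg _) _), Finset.abs_prod]
    rw [habs]
    rcases eq_or_ne y 0 with rfl | hy
    · have hz : ‖(0:Euc d)‖ ^ c = 0 := by rw [norm_zero, Real.zero_rpow hc0.ne]
      have hz2 : ∀ j : Fin m, (0:ℝ≥0∞) ^ (s / pp j) = 0 :=
        fun j => ENNReal.zero_rpow_of_pos (htpos j)
      simp only [hz, mul_zero, ENNReal.ofReal_zero, hz2]
      rw [Finset.prod_const, zero_pow]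
      simpa using hm.ne'
    · have hb : 0 < ‖y‖ ^ c := Real.rpow_pos_of_pos (norm_pos_iff.mpr hy) c
      have hreal : (∏ j, |f j (x - θ j • y)|) * ‖y‖ ^ c
          = ∏ j, (|f j (x - θ j • y)| ^ (pp j / s) * ‖y‖ ^ c) ^ (s / pp j) := by
        have heach : ∀ j : Fin m,
            (|f j (x - θ j • y)| ^ (pp j / s) * ‖y‖ ^ c) ^ (s / pp j)
            = |f j (x - θ j • y)| * (‖y‖ ^ c) ^ (s / pp j) := by
          intro j
          rw [Real.mul_rpow (Real.rpow_nonneg (abs_nonneg _) _) hb.le,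
            ← Real.rpow_mul (abs_nonneg _), hqt j, Real.rpow_one]
        symm
        calc ∏ j, (|f j (x - θ j • y)| ^ (pp j / s) * ‖y‖ ^ c) ^ (s / pp j)
            = ∏ j, (|f j (x - θ j • y)| * (‖y‖ ^ c) ^ (s / pp j)) :=
              Finset.prod_congr rfl fun j _ => heach j
          _ = (∏ j, |f j (x - θ j • y)|) * ∏ j, (‖y‖ ^ c) ^ (s / pp j) :=
              Finset.prod_mul_distrib
          _ = (∏ j, |f j (x - θ j • y)|) * ‖y‖ ^ c := by
              rw [← Real.rpow_sum_of_pos hb, htsum, Real.rpow_one]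
      rw [hreal,
        ENNReal.ofReal_prod_of_nonneg (fun j _ => Real.rpow_nonneg (by positivity) _)]
      exact Finset.prod_congr rfl fun j _ =>
        (ENNReal.ofReal_rpow_of_nonneg (by positivity) (htpos j).le).symm
  set T : ℝ≥0∞ := ∫⁻ y in ball (0 : Euc d) R,
    ENNReal.ofReal |(∏ j, f j (x - θ j • y)) * ‖y‖ ^ c| with hTdef
  have hTle : T ≤ ∏ j, (ENNReal.ofReal (θ j ^ (-((d:ℝ) * β))) * L j) ^ (s / pp j) := by
    calc T = ∫⁻ y in ball (0 : Euc d) R,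
          ∏ j, (ENNReal.ofReal
            (|f j (x - θ j • y)| ^ (pp j / s) * ‖y‖ ^ c)) ^ (s / pp j) := by
          rw [hTdef]; exact lintegral_congr fun y => hpointwise y
      _ ≤ ∏ j, (∫⁻ y in ball (0 : Euc d) R,
            ENNReal.ofReal (|f j (x - θ j • y)| ^ (pp j / s) * ‖y‖ ^ c)) ^ (s / pp j) :=
          ENNReal.lintegral_prod_norm_pow_le _
            (fun j _ => (ENNReal.measurable_ofReal.comp (hG j)).aemeasurable) htsum
            (fun j _ => (htpos j).le)
      _ = ∏ j, (ENNReal.ofReal (θ j ^ (-((d:ℝ) * β))) * L j) ^ (s / pp j) :=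
          Finset.prod_congr rfl fun j _ => by rw [hscale j]
  have hfinprod : (∏ j, (ENNReal.ofReal (θ j ^ (-((d:ℝ)*β))) * L j) ^ (s / pp j)) ≠ ∞ := by
    refine (ENNReal.prod_lt_top fun j _ => ?_).ne
    exact ENNReal.rpow_lt_top_of_nonneg (htpos j).le
      (ENNReal.mul_lt_top ENNReal.ofReal_lt_top (hLfin j)).ne
  have habs_main : |IfracMulti a β θ f x| ≤ C * T.toReal := by
    simp only [IfracMulti]
    rw [← hc, ← hCdef, ← hRdef, abs_mul, abs_of_pos hC0]
    refine mul_le_mul_of_nonneg_left ?_ hC0.le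
    have h1 : |∫ y in ball (0 : Euc d) R, (∏ j, f j (x - θ j • y)) * ‖y‖ ^ c|
        ≤ ∫ y in ball (0 : Euc d) R, |(∏ j, f j (x - θ j • y)) * ‖y‖ ^ c| := by
      simpa only [Real.norm_eq_abs] using
        norm_integral_le_integral_norm (μ := volume.restrict (ball (0 : Euc d) R))
          (fun y => (∏ j, f j (x - θ j • y)) * ‖y‖ ^ c)
    have h2 : ∫ y in ball (0 : Euc d) R, |(∏ j, f j (x - θ j • y)) * ‖y‖ ^ c|
        = T.toReal := by
      rw [hTdef]
      exact integral_eq_lintegral_of_nonneg_ae (.of_forall fun y => abs_nonneg _)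
        hF.abs.aestronglyMeasurable
    exact h1.trans_eq h2
  have hT2 : T.toReal
      ≤ (∏ j, (ENNReal.ofReal (θ j ^ (-((d:ℝ)*β))) * L j) ^ (s / pp j)).toReal :=
    ENNReal.toReal_mono hfinprod hTle
  have hRHS : (∏ j, (ENNReal.ofReal (θ j ^ (-((d:ℝ)*β))) * L j) ^ (s / pp j)).toReal
      = ∏ j, (θ j ^ (-((d:ℝ)*β)) * (L j).toReal) ^ (s / pp j) := by
    rw [ENNReal.toReal_prod]
    refine Finset.prod_congr rfl fun j _ => ?_
    rw [← ENNReal.toReal_rpow, ENNReal.toReal_mul,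
      ENNReal.toReal_ofReal (Real.rpow_nonneg (hθ j).le _)]
  have hLnn : ∀ j, (0:ℝ) ≤ (L j).toReal := fun j => ENNReal.toReal_nonneg
  calc |IfracMulti a β θ f x| ≤ C * T.toReal := habs_main
    _ ≤ C * ∏ j, (θ j ^ (-((d:ℝ)*β)) * (L j).toReal) ^ (s / pp j) := by
        rw [← hRHS]; exact mul_le_mul_of_nonneg_left hT2 hC0.le
    _ = C * ((∏ j, (θ j ^ (-((d:ℝ)*β))) ^ (s / pp j)) *
          ∏ j, ((L j).toReal) ^ (s / pp j)) := by
        rw [← Finset.prod_mul_distrib]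
        congr 1
        exact Finset.prod_congr rfl fun j _ =>
          Real.mul_rpow (Real.rpow_nonneg (hθ j).le _) (hLnn j)
    _ = (∏ j, θ j ^ (-(d:ℝ) * β * s / pp j)) *
          (C * ∏ j, ((L j).toReal) ^ (s / pp j)) := by
        rw [show (∏ j, (θ j ^ (-((d:ℝ)*β))) ^ (s / pp j))
            = ∏ j, θ j ^ (-(d:ℝ) * β * s / pp j) from
          Finset.prod_congr rfl fun j _ => by
            rw [← Real.rpow_mul (hθ j).le]; congr 1; ring]
        ring
    _ = (∏ j, θ j ^ (-(d:ℝ) * β * s / pp j)) *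
          ∏ j, (C * (L j).toReal) ^ (s / pp j) := by
        congr 1
        have hCprod : (∏ j : Fin m, C ^ (s / pp j)) = C := by
          rw [← Real.rpow_sum_of_pos hC0, htsum, Real.rpow_one]
        calc C * ∏ j, ((L j).toReal) ^ (s / pp j)
            = (∏ j : Fin m, C ^ (s / pp j)) * ∏ j, ((L j).toReal) ^ (s / pp j) := by
              rw [hCprod]
          _ = ∏ j, (C ^ (s / pp j) * ((L j).toReal) ^ (s / pp j)) :=
              Finset.prod_mul_distrib.symm
          _ = ∏ j, (C * (L j).toReal) ^ (s / pp j) :=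
              Finset.prod_congr rfl fun j _ => (Real.mul_rpow hC0.le (hLnn j)).symm
    _ = (∏ j, θ j ^ (-(d:ℝ) * β * s / pp j)) *
          ∏ j, (Ifrac (θ j * a) β (fun y => |f j y| ^ (pp j / s)) x) ^ (s / pp j) := by
        congr 1
        exact Finset.prod_congr rfl fun j _ => by rw [hIfrac j]
end
end

section
/- Let a>0 and 0 ≤ β_1 < β < β_2 ≤ 1. Let Ω : ℝ^d → ℝ be homogeneous of degree 0 (Ω(tx) = Ω(x) for all t>0, x≠0) with ∫_{S^{d-1}} |Ω|^s dσ < ∞ for some s>1. Then there is a constant C (independent of f and x) such that for all f ∈ L¹_loc(γ) and all x ∈ ℝ^d: |I_{Ω,β}^a(f)(x)| ≤ C [M_{Ω,β_1}^{2a}(f)(x)]^{(β_2−β)/(β_2−β_1)} · [M_{Ω,β_2}^{2a}(f)(x)]^{(β−β_1)/(β_2−β_1)}. -/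
open MeasureTheory ENNReal Real Set Metric
open scoped Classical

noncomputable section

/-- The surface measure σ on the unit sphere S^{d-1}. -/
def sphereMeasure (d : ℕ) : Measure (sphere (0 : Euc d) 1) :=
  (volume : Measure (Euc d)).toSphere

/-- The local fractional maximal operator with rough kernel Ω:
M_{Ω,β}^a(f)(x) = sup_{B∈𝓑_a(x)} γ(B)^{β-1} ∫_B |Ω(x-y)||f(y)| dγ(y). -/
def roughMax {d : ℕ} (a β : ℝ) (Ω f : Euc d → ℝ) (x : Euc d) : ℝ≥0∞ :=
  ⨆ (c : Euc d) (r : ℝ) (_ : IsAdm a c r) (_ : x ∈ ball c r),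
    (gaussMeasure d (ball c r)) ^ (β - 1) *
      ∫⁻ y in ball c r, ENNReal.ofReal |Ω (x - y)| * ENNReal.ofReal |f y| ∂gaussMeasure d

/-- The local fractional integral operator with rough kernel Ω:
I_{Ω,β}^a(f)(x) = ∫_{B(x,a m(x))} Ω(x-y) f(y) γ(B(x,|x-y|))^{β-1} dγ(y). -/
def roughIfrac {d : ℕ} (a β : ℝ) (Ω f : Euc d → ℝ) (x : Euc d) : ℝ :=
  ∫ y in ball x (a * adm x),
    Ω (x - y) * f y * ((gaussMeasure d (ball x ‖x - y‖)).toReal) ^ (β - 1) ∂gaussMeasure d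

section Aux

set_option maxHeartbeats 1000000

lemma rpow_anti {x y : ℝ≥0∞} {z : ℝ} (hz : z ≤ 0) (h : x ≤ y) : y ^ z ≤ x ^ z := by
  have h1 : y ^ z = (y ^ (-z))⁻¹ := by rw [← ENNReal.rpow_neg, neg_neg]
  have h2 : x ^ z = (x ^ (-z))⁻¹ := by rw [← ENNReal.rpow_neg, neg_neg]
  rw [h1, h2]
  exact ENNReal.inv_le_inv.mpr (ENNReal.rpow_le_rpow h (neg_nonneg.mpr hz))

lemma rpow_ne_top' {x : ℝ≥0∞} (h0 : x ≠ 0) (ht : x ≠ ⊤) (y : ℝ) : x ^ y ≠ ⊤ := by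
  simp [ENNReal.rpow_eq_top_iff, h0, ht]

lemma rpow_ne_zero' {x : ℝ≥0∞} (h0 : x ≠ 0) (ht : x ≠ ⊤) (y : ℝ) : x ^ y ≠ 0 := by
  simp [ENNReal.rpow_eq_zero_iff, h0, ht]

lemma enn_min_mul (x y g : ℝ≥0∞) : min (x * g) (y * g) = min x y * g := by
  rcases le_total x y with h | h
  · rw [min_eq_left h, min_eq_left (mul_le_mul_left h g)]
  · rw [min_eq_right h, min_eq_right (mul_le_mul_left h g)]

lemma sum_min_geom (q : ℝ≥0∞) (hq0 : q ≠ 0) (hq1 : q < 1) (u₀ : ℝ≥0∞) (hu0 : u₀ ≠ 0)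
    (hu : u₀ ≠ ⊤) (α δ : ℝ) (hα : 0 < α) (hδ : 0 < δ) :
    ∑' k : ℕ, min ((u₀ * q ^ k) ^ α) ((u₀ * q ^ k) ^ (-δ)) ≤ (1 - q ^ δ)⁻¹ + (1 - q ^ α)⁻¹ := by
  set f : ℕ → ℝ≥0∞ := fun k => min ((u₀ * q ^ k) ^ α) ((u₀ * q ^ k) ^ (-δ)) with hf
  have hex : ∃ k : ℕ, u₀ * q ^ k ≤ 1 := by
    have h0 : Filter.Tendsto (fun k : ℕ => q ^ k) Filter.atTop (nhds 0) :=
      ENNReal.tendsto_pow_atTop_nhds_zero_of_lt_one hq1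
    have hpos : (0 : ℝ≥0∞) < u₀⁻¹ := by simp [ENNReal.inv_pos, hu]
    have := h0.eventually_lt_const hpos
    obtain ⟨k, hk⟩ := this.exists
    exact ⟨k, by
      calc u₀ * q ^ k ≤ u₀ * u₀⁻¹ := mul_le_mul_right hk.le _
      _ = 1 := ENNReal.mul_inv_cancel hu0 hu⟩
  set k₀ := Nat.find hex with hk₀
  have hspec : u₀ * q ^ k₀ ≤ 1 := Nat.find_spec hex
  have hmin : ∀ k < k₀, 1 < u₀ * q ^ k := fun k hk => not_le.mp (Nat.find_min hex hk)
  have hsplit : ∑' k, f k = ∑ k ∈ Finset.range k₀, f k + ∑' k, f (k + k₀) :=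
    (Summable.sum_add_tsum_nat_add' (k := k₀) ENNReal.summable).symm
  rw [hsplit]
  have h1 : ∑' k : ℕ, f (k + k₀) ≤ (1 - q ^ α)⁻¹ := by
    rw [← ENNReal.tsum_geometric (q ^ α)]
    apply ENNReal.tsum_le_tsum
    intro k
    calc f (k + k₀) ≤ (u₀ * q ^ (k + k₀)) ^ α := min_le_left _ _
      _ ≤ (q ^ k) ^ α := by
          apply ENNReal.rpow_le_rpow _ hα.le
          calc u₀ * q ^ (k + k₀) = u₀ * q ^ k₀ * q ^ k := by ring
            _ ≤ 1 * q ^ k := mul_le_mul_left hspec _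
            _ = q ^ k := one_mul _
      _ = (q ^ α) ^ k := by
          rw [← ENNReal.rpow_natCast (q ^ α) k, ← ENNReal.rpow_natCast q k,
            ← ENNReal.rpow_mul, ← ENNReal.rpow_mul, mul_comm]
  have h2 : ∑ k ∈ Finset.range k₀, f k ≤ (1 - q ^ δ)⁻¹ := by
    rw [← ENNReal.tsum_geometric (q ^ δ)]
    calc ∑ k ∈ Finset.range k₀, f k ≤ ∑ k ∈ Finset.range k₀, (q ^ δ) ^ (k₀ - 1 - k) := by
          apply Finset.sum_le_sum
          intro k hk
          rw [Finset.mem_range] at hk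
          have hqT : q ≠ ⊤ := (lt_of_lt_of_le hq1 le_top).ne
          have hqk : (q ^ (k₀ - 1 - k) : ℝ≥0∞)⁻¹ ≤ u₀ * q ^ k := by
            rw [ENNReal.inv_le_iff_le_mul (fun _ => pow_ne_zero _ hq0)
              (fun h => absurd h (ENNReal.pow_ne_top hqT))]
            have h1k : 1 ≤ u₀ * q ^ (k₀ - 1) := (hmin (k₀ - 1) (by omega)).le
            calc (1:ℝ≥0∞) ≤ u₀ * q ^ (k₀ - 1) := h1k
              _ = u₀ * q ^ k * q ^ (k₀ - 1 - k) := by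
                  rw [mul_assoc, ← pow_add]
                  congr 2
                  omega
              _ = q ^ (k₀ - 1 - k) * (u₀ * q ^ k) := by ring
          calc f k ≤ (u₀ * q ^ k) ^ (-δ) := min_le_right _ _
            _ ≤ ((q ^ (k₀ - 1 - k) : ℝ≥0∞)⁻¹) ^ (-δ) := rpow_anti (by linarith) hqk
            _ = (q ^ (k₀ - 1 - k)) ^ δ := by
                rw [← ENNReal.rpow_natCast q, ← ENNReal.rpow_neg, ← ENNReal.rpow_mul,
                  ← ENNReal.rpow_mul]
                congr 1
                ring
            _ = (q ^ δ) ^ (k₀ - 1 - k) := by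
                rw [← ENNReal.rpow_natCast (q ^ δ), ← ENNReal.rpow_natCast q,
                  ← ENNReal.rpow_mul, ← ENNReal.rpow_mul, mul_comm]
      _ = ∑ k ∈ Finset.range k₀, (q ^ δ) ^ k := Finset.sum_range_reflect _ _
      _ ≤ ∑' k : ℕ, (q ^ δ) ^ k := ENNReal.sum_le_tsum _
  exact add_le_add h2 h1

lemma adm_pos {d : ℕ} (x : Euc d) : 0 < adm x := by
  unfold adm
  split
  · norm_num
  · next h => exact inv_pos.mpr (lt_trans one_pos (not_le.mp h))

lemma adm_le_one {d : ℕ} (x : Euc d) : adm x ≤ 1 := by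
  unfold adm
  split
  · exact le_refl 1
  · next h => exact inv_le_one_of_one_le₀ (not_le.mp h).le

lemma adm_mul_norm_le_one {d : ℕ} (x : Euc d) : adm x * ‖x‖ ≤ 1 := by
  unfold adm
  split
  · next h => simpa using h
  · next h =>
      have hx : (0:ℝ) < ‖x‖ := lt_trans one_pos (not_le.mp h)
      rw [inv_mul_cancel₀ hx.ne']

lemma normsq_bound {d : ℕ} (x y : Euc d) (b : ℝ) (hb : 0 < b)
    (h : dist y x ≤ b * adm x) : |‖y‖ ^ 2 - ‖x‖ ^ 2| ≤ 2 * b + 3 * b ^ 2 := by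
  set t := dist y x with htdef
  have ht0 : 0 ≤ t := dist_nonneg
  have htb : t ≤ b := h.trans (by nlinarith [adm_le_one x, adm_pos x])
  have htx : t * ‖x‖ ≤ b := by
    calc t * ‖x‖ ≤ b * adm x * ‖x‖ := by
          apply mul_le_mul_of_nonneg_right h (norm_nonneg x)
      _ = b * (adm x * ‖x‖) := by ring
      _ ≤ b * 1 := by
          apply mul_le_mul_of_nonneg_left (adm_mul_norm_le_one x) hb.le
      _ = b := mul_one b
  have hy1 : ‖y‖ ≤ ‖x‖ + t := by
    have := norm_sub_norm_le y x
    rw [htdef, dist_eq_norm]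
    linarith [this]
  have hx1 : ‖x‖ ≤ ‖y‖ + t := by
    have := norm_sub_norm_le x y
    rw [htdef, dist_eq_norm]
    have h2 : ‖x - y‖ = ‖y - x‖ := norm_sub_rev x y
    linarith [this, h2.le]
  have hxn : 0 ≤ ‖x‖ := norm_nonneg x
  have hyn : 0 ≤ ‖y‖ := norm_nonneg y
  rw [abs_le]
  constructor
  · nlinarith [mul_le_mul_of_nonneg_left htb ht0]
  · nlinarith [mul_le_mul_of_nonneg_left htb ht0]

lemma gauss_ball_bounds {d : ℕ} (x : Euc d) (b t : ℝ) (hb : 0 < b) (ht : 0 < t)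
    (h : t ≤ b * adm x) :
    ENNReal.ofReal (Real.exp (-(2 * b + 3 * b ^ 2))) *
        (ENNReal.ofReal (Real.pi ^ (-(d : ℝ) / 2) * Real.exp (-‖x‖ ^ 2)) * volume (ball x t)) ≤
      gaussMeasure d (ball x t) ∧
    gaussMeasure d (ball x t) ≤ ENNReal.ofReal (Real.exp (2 * b + 3 * b ^ 2)) *
        (ENNReal.ofReal (Real.pi ^ (-(d : ℝ) / 2) * Real.exp (-‖x‖ ^ 2)) * volume (ball x t)) := by
  have hπ : (0:ℝ) < Real.pi ^ (-(d : ℝ) / 2) := Real.rpow_pos_of_pos Real.pi_pos _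
  have hmeas : gaussMeasure d (ball x t) =
      ∫⁻ y in ball x t, ENNReal.ofReal (Real.pi ^ (-(d : ℝ) / 2) * Real.exp (-‖y‖ ^ 2)) ∂volume := by
    rw [gaussMeasure, withDensity_apply _ measurableSet_ball]
  have hpt : ∀ y ∈ ball x t, |‖y‖ ^ 2 - ‖x‖ ^ 2| ≤ 2 * b + 3 * b ^ 2 := by
    intro y hy
    exact normsq_bound x y b hb ((mem_ball.mp hy).le.trans h)
  constructor
  · rw [hmeas, ← setLIntegral_const (ball x t)
      (ENNReal.ofReal (Real.pi ^ (-(d : ℝ) / 2) * Real.exp (-‖x‖ ^ 2))), ← lintegral_const_mul' _ _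
      ENNReal.ofReal_ne_top]
    apply setLIntegral_mono' measurableSet_ball
    intro y hy
    rw [← ENNReal.ofReal_mul (Real.exp_nonneg _)]
    apply ENNReal.ofReal_le_ofReal
    have h1 := (abs_le.mp (hpt y hy)).2
    calc Real.exp (-(2*b+3*b^2)) * (Real.pi ^ (-(d : ℝ) / 2) * Real.exp (-‖x‖ ^ 2))
        = Real.pi ^ (-(d : ℝ) / 2) * (Real.exp (-(2*b+3*b^2)) * Real.exp (-‖x‖ ^ 2)) := by ring
      _ = Real.pi ^ (-(d : ℝ) / 2) * Real.exp (-(2*b+3*b^2) + -‖x‖ ^ 2) := by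
          rw [Real.exp_add]
      _ ≤ Real.pi ^ (-(d : ℝ) / 2) * Real.exp (-‖y‖ ^ 2) := by
          apply mul_le_mul_of_nonneg_left _ hπ.le
          apply Real.exp_le_exp.mpr
          linarith
  · rw [hmeas, ← setLIntegral_const (ball x t)
      (ENNReal.ofReal (Real.pi ^ (-(d : ℝ) / 2) * Real.exp (-‖x‖ ^ 2))), ← lintegral_const_mul' _ _
      ENNReal.ofReal_ne_top]
    apply setLIntegral_mono' measurableSet_ball
    intro y hy
    rw [← ENNReal.ofReal_mul (Real.exp_nonneg _)]
    apply ENNReal.ofReal_le_ofReal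
    have h1 := (abs_le.mp (hpt y hy)).1
    calc Real.pi ^ (-(d : ℝ) / 2) * Real.exp (-‖y‖ ^ 2)
        ≤ Real.pi ^ (-(d : ℝ) / 2) * Real.exp ((2*b+3*b^2) + -‖x‖ ^ 2) := by
          apply mul_le_mul_of_nonneg_left _ hπ.le
          apply Real.exp_le_exp.mpr
          linarith
      _ = Real.exp (2*b+3*b^2) * (Real.pi ^ (-(d : ℝ) / 2) * Real.exp (-‖x‖ ^ 2)) := by
          rw [Real.exp_add]; ring

lemma vol_ball_eq {d : ℕ} (x : Euc d) {t : ℝ} (ht : 0 < t) :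
    volume (ball x t) = ENNReal.ofReal (t ^ d) * volume (ball (0 : Euc d) 1) := by
  rw [Measure.addHaar_ball_of_pos volume x ht, finrank_euclideanSpace_fin]

end Aux
set_option maxHeartbeats 2000000 in
/-- pointwise bound of the local rough fractional integral by a product of
local rough fractional maximal functions. -/
theorem stmt12 {d : ℕ} (hd : 0 < d) (a : ℝ) (ha : 0 < a)
    (β β₁ β₂ : ℝ) (hβ1 : 0 ≤ β₁) (h12 : β₁ < β) (h2 : β < β₂) (hβ2 : β₂ ≤ 1)
    (s : ℝ) (hs : 1 < s)
    (Ω : Euc d → ℝ) (hΩm : Measurable Ω)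
    (hΩh : ∀ (t : ℝ) (x : Euc d), 0 < t → x ≠ 0 → Ω (t • x) = Ω x)
    (hΩs : (∫⁻ z : sphere (0 : Euc d) 1,
        ENNReal.ofReal |Ω ↑z| ^ s ∂sphereMeasure d) < ⊤) :
    ∃ C : ℝ≥0∞, C ≠ ⊤ ∧ ∀ f : Euc d → ℝ, LocallyIntegrable f (gaussMeasure d) →
      ∀ x : Euc d,
        ENNReal.ofReal |roughIfrac a β Ω f x| ≤
          C * (roughMax (2 * a) β₁ Ω f x) ^ ((β₂ - β) / (β₂ - β₁)) *
            (roughMax (2 * a) β₂ Ω f x) ^ ((β - β₁) / (β₂ - β₁)) := by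
  have hβlt1 : β < 1 := lt_of_lt_of_le h2 hβ2
  have hβ1lt1 : β₁ < 1 := lt_trans h12 hβlt1
  -- the geometric ratio
  set q : ℝ≥0∞ := ((2 : ℝ≥0∞)⁻¹) ^ d with hqdef
  have h2inv0 : ((2 : ℝ≥0∞)⁻¹) ≠ 0 := ENNReal.inv_ne_zero.mpr (by norm_num)
  have hq0 : q ≠ 0 := pow_ne_zero _ h2inv0
  have hqtop : q ≠ ⊤ := ENNReal.pow_ne_top (ENNReal.inv_ne_top.mpr (by norm_num))
  have hq1 : q < 1 := by
    calc q ≤ ((2 : ℝ≥0∞)⁻¹) ^ 1 := by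
          apply pow_le_pow_of_le_one zero_le _ hd
          exact ENNReal.inv_le_one.mpr (by norm_num)
      _ = (2 : ℝ≥0∞)⁻¹ := pow_one _
      _ < 1 := by
          rw [ENNReal.inv_lt_one]
          norm_num
  -- the doubling constants
  set K₁ : ℝ≥0∞ := ENNReal.ofReal (Real.exp (-(2 * a + 3 * a ^ 2))) with hK₁def
  set K₂ : ℝ≥0∞ := ENNReal.ofReal (Real.exp (2 * a + 3 * a ^ 2)) with hK₂def
  have hK₁0 : K₁ ≠ 0 := (ENNReal.ofReal_pos.mpr (Real.exp_pos _)).ne'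
  have hK₂0 : K₂ ≠ 0 := (ENNReal.ofReal_pos.mpr (Real.exp_pos _)).ne'
  have hK₁top : K₁ ≠ ⊤ := ENNReal.ofReal_ne_top
  have hK₂top : K₂ ≠ ⊤ := ENNReal.ofReal_ne_top
  set D₁ : ℝ≥0∞ := (K₁ * q) ^ (β - 1) * K₂ ^ (1 - β₁) with hD₁def
  set D₂ : ℝ≥0∞ := (K₁ * q) ^ (β - 1) * K₂ ^ (1 - β₂) with hD₂def
  have hD₁0 : D₁ ≠ 0 := mul_ne_zero
    (rpow_ne_zero' (mul_ne_zero hK₁0 hq0) (ENNReal.mul_ne_top hK₁top hqtop) _)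
    (rpow_ne_zero' hK₂0 hK₂top _)
  have hD₁top : D₁ ≠ ⊤ := ENNReal.mul_ne_top
    (rpow_ne_top' (mul_ne_zero hK₁0 hq0) (ENNReal.mul_ne_top hK₁top hqtop) _)
    (rpow_ne_top' hK₂0 hK₂top _)
  have hD₂top : D₂ ≠ ⊤ := ENNReal.mul_ne_top
    (rpow_ne_top' (mul_ne_zero hK₁0 hq0) (ENNReal.mul_ne_top hK₁top hqtop) _)
    (rpow_ne_top' hK₂0 hK₂top _)
  set Dm : ℝ≥0∞ := max D₁ D₂ with hDmdef
  have hDm0 : Dm ≠ 0 := fun h => hD₁0 (le_antisymm (h ▸ le_max_left D₁ D₂) zero_le)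
  have hDmtop : Dm ≠ ⊤ := by
    rw [hDmdef, Ne, max_eq_top]
    rintro (h | h)
    · exact hD₁top h
    · exact hD₂top h
  set Cq : ℝ≥0∞ := (1 - q ^ (β₂ - β))⁻¹ + (1 - q ^ (β - β₁))⁻¹ with hCqdef
  have hCqtop : Cq ≠ ⊤ := by
    have e1 : (1 : ℝ≥0∞) - q ^ (β₂ - β) ≠ 0 := by
      have : q ^ (β₂ - β) < 1 := ENNReal.rpow_lt_one hq1 (by linarith)
      exact (tsub_pos_of_lt this).ne'
    have e2 : (1 : ℝ≥0∞) - q ^ (β - β₁) ≠ 0 := by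
      have : q ^ (β - β₁) < 1 := ENNReal.rpow_lt_one hq1 (by linarith)
      exact (tsub_pos_of_lt this).ne'
    exact ENNReal.add_ne_top.mpr ⟨ENNReal.inv_ne_top.mpr e1, ENNReal.inv_ne_top.mpr e2⟩
  have hCq0 : Cq ≠ 0 := by
    have : (1 : ℝ≥0∞) - q ^ (β₂ - β) ≠ ⊤ :=
      (lt_of_le_of_lt (tsub_le_self) one_lt_top).ne
    have h1 : (1 - q ^ (β₂ - β))⁻¹ ≠ 0 := ENNReal.inv_ne_zero.mpr this
    intro h
    rw [hCqdef, add_eq_zero] at h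
    exact h1 h.1
  refine ⟨Dm * Cq, ENNReal.mul_ne_top hDmtop hCqtop, ?_⟩
  have hC0 : Dm * Cq ≠ 0 := mul_ne_zero hDm0 hCq0
  intro f hf x
  -- geometry at the point x
  have hadmx : 0 < adm x := adm_pos x
  set R : ℝ := a * adm x with hRdef
  have hR : 0 < R := mul_pos ha hadmx
  set r : ℕ → ℝ := fun k => R * (2⁻¹ : ℝ) ^ k with hrdef
  have hrpos : ∀ k, 0 < r k := fun k => mul_pos hR (pow_pos (by norm_num) k)
  have hrle : ∀ k, r k ≤ R := by
    intro k
    calc r k ≤ R * 1 := by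
          apply mul_le_mul_of_nonneg_left _ hR.le
          exact pow_le_one₀ (by norm_num) (by norm_num)
      _ = R := mul_one R
  have hrmono : ∀ m n : ℕ, m ≤ n → r n ≤ r m := by
    intro m n hmn
    apply mul_le_mul_of_nonneg_left _ hR.le
    exact pow_le_pow_of_le_one (by norm_num) (by norm_num) hmn
  have hadmk : ∀ t : ℝ, 0 < t → t ≤ R → IsAdm (2 * a) x t := by
    intro t h1 h2
    refine ⟨h1, ?_⟩
    rw [hRdef] at h2
    nlinarith [hadmx, ha]
  -- the Gaussian measures of the centered balls
  set g : ℕ → ℝ≥0∞ := fun k => gaussMeasure d (ball x (r k)) with hgdef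
  set E : ℝ≥0∞ := ENNReal.ofReal (Real.pi ^ (-(d : ℝ) / 2) * Real.exp (-‖x‖ ^ 2)) with hEdef
  set V : ℝ≥0∞ := volume (ball (0 : Euc d) 1) with hVdef
  set c : ℝ≥0∞ := E * (ENNReal.ofReal (R ^ d) * V) with hcdef
  have hE0 : E ≠ 0 := by
    rw [hEdef]
    refine (ENNReal.ofReal_pos.mpr ?_).ne'
    positivity
  have hEtop : E ≠ ⊤ := ENNReal.ofReal_ne_top
  have hV0 : V ≠ 0 := (measure_ball_pos volume (0 : Euc d) one_pos).ne'
  have hVtop : V ≠ ⊤ := measure_ball_lt_top.ne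
  have hc0 : c ≠ 0 := by
    refine mul_ne_zero hE0 (mul_ne_zero ?_ hV0)
    exact (ENNReal.ofReal_pos.mpr (by positivity)).ne'
  have hctop : c ≠ ⊤ :=
    ENNReal.mul_ne_top hEtop (ENNReal.mul_ne_top ENNReal.ofReal_ne_top hVtop)
  have hvol : ∀ k : ℕ, volume (ball x (r k)) = ENNReal.ofReal (R ^ d) * V * q ^ k := by
    intro k
    rw [vol_ball_eq x (hrpos k), ← hVdef]
    have hre : (r k) ^ d = R ^ d * ((2⁻¹ : ℝ) ^ d) ^ k := by
      rw [hrdef]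
      simp only
      rw [mul_pow, ← pow_mul, ← pow_mul, mul_comm k d]
    have h1 : ENNReal.ofReal ((2⁻¹ : ℝ) ^ d) = q := by
      rw [ENNReal.ofReal_pow (by norm_num), ENNReal.ofReal_inv_of_pos (by norm_num), hqdef]
      norm_num
    have h2 : ENNReal.ofReal (((2⁻¹ : ℝ) ^ d) ^ k) = q ^ k := by
      rw [ENNReal.ofReal_pow (by positivity), h1]
    rw [hre, ENNReal.ofReal_mul (by positivity), h2]
    ring
  have hgU : ∀ k, g k ≤ K₂ * (c * q ^ k) := by
    intro k
    have := (gauss_ball_bounds x a (r k) ha (hrpos k) ((hrle k).trans_eq hRdef)).2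
    rw [hvol k] at this
    calc g k ≤ K₂ * (E * (ENNReal.ofReal (R ^ d) * V * q ^ k)) := this
      _ = K₂ * (c * q ^ k) := by rw [hcdef]; ring
  have hgL : ∀ k, K₁ * (c * q ^ k) ≤ g k := by
    intro k
    have := (gauss_ball_bounds x a (r k) ha (hrpos k) ((hrle k).trans_eq hRdef)).1
    rw [hvol k] at this
    calc K₁ * (c * q ^ k) = K₁ * (E * (ENNReal.ofReal (R ^ d) * V * q ^ k)) := by
          rw [hcdef]; ring
      _ ≤ g k := this
  have hg0 : ∀ k, g k ≠ 0 := by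
    intro k
    have : (0 : ℝ≥0∞) < K₁ * (c * q ^ k) :=
      zero_lt_iff.mpr (mul_ne_zero hK₁0 (mul_ne_zero hc0 (pow_ne_zero _ hq0)))
    exact (this.trans_le (hgL k)).ne'
  have hgtop : ∀ k, g k ≠ ⊤ := by
    intro k
    exact ne_top_of_le_ne_top
      (ENNReal.mul_ne_top hK₂top (ENNReal.mul_ne_top hctop (ENNReal.pow_ne_top hqtop))) (hgU k)
  -- the averages over centered balls are controlled by the maximal functions
  set P : ℕ → ℝ≥0∞ := fun k =>
    ∫⁻ y in ball x (r k), ENNReal.ofReal |Ω (x - y)| * ENNReal.ofReal |f y| ∂gaussMeasure d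
    with hPdef
  have hPM : ∀ (β' : ℝ) (k : ℕ), g k ^ (β' - 1) * P k ≤ roughMax (2 * a) β' Ω f x := by
    intro β' k
    have h1 : IsAdm (2 * a) x (r k) := hadmk _ (hrpos k) (hrle k)
    have h1x : x ∈ ball x (r k) := mem_ball_self (hrpos k)
    rw [roughMax]
    exact le_iSup_of_le x (le_iSup_of_le (r k) (le_iSup_of_le h1 (le_iSup_of_le h1x le_rfl)))
  have hPle : ∀ (β' : ℝ) (k : ℕ),
      P k ≤ g k ^ (1 - β') * roughMax (2 * a) β' Ω f x := by
    intro β' k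
    calc P k = (g k ^ (1 - β') * g k ^ (β' - 1)) * P k := by
          rw [← ENNReal.rpow_add _ _ (hg0 k) (hgtop k)]
          norm_num
      _ = g k ^ (1 - β') * (g k ^ (β' - 1) * P k) := by ring
      _ ≤ g k ^ (1 - β') * roughMax (2 * a) β' Ω f x :=
          mul_le_mul_right (hPM β' k) _
  -- the annuli
  set A : ℕ → Set (Euc d) := fun k => ball x (r k) \ ball x (r (k + 1)) with hAdef
  have hAm : ∀ k, MeasurableSet (A k) := fun k =>
    measurableSet_ball.diff measurableSet_ball
  have hAsub : ∀ k, A k ⊆ ball x (r k) := fun k => diff_subset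
  have hAdisj : Pairwise (Function.onFun Disjoint A) := by
    have key : ∀ m n : ℕ, m < n → Disjoint (A m) (A n) := by
      intro m n hmn
      rw [Set.disjoint_left]
      intro y hym hyn
      exact hym.2 (mem_of_mem_of_subset hyn.1 (ball_subset_ball (hrmono (m+1) n hmn)))
    intro m n hmn
    rcases lt_or_gt_of_ne hmn with h | h
    · exact key m n h
    · exact (key n m h).symm
  have hUnion : (⋃ k, A k) = ball x R \ {x} := by
    ext y
    simp only [mem_iUnion, hAdef, mem_diff, mem_ball, mem_singleton_iff]
    constructor
    · rintro ⟨k, hk1, hk2⟩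
      refine ⟨lt_of_lt_of_le hk1 (hrle k), ?_⟩
      intro hyx
      apply hk2
      rw [hyx]
      simpa using hrpos (k + 1)
    · rintro ⟨hyR, hyx⟩
      have ht0 : 0 < dist y x := dist_pos.mpr hyx
      have hex : ∃ n : ℕ, r n ≤ dist y x := by
        obtain ⟨n, hn⟩ := exists_pow_lt_of_lt_one (div_pos ht0 hR) (by norm_num : (2⁻¹:ℝ) < 1)
        refine ⟨n, ?_⟩
        have : R * (2⁻¹:ℝ) ^ n < R * (dist y x / R) := by
          apply mul_lt_mul_of_pos_left hn hR
        rw [mul_div_cancel₀ _ hR.ne'] at this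
        exact le_of_lt (by simpa [hrdef] using this)
      set n₀ := Nat.find hex with hn₀
      have hle : r n₀ ≤ dist y x := Nat.find_spec hex
      have hn₀pos : 0 < n₀ := by
        rcases Nat.eq_zero_or_pos n₀ with h | h
        · exfalso
          have h0 : r 0 ≤ dist y x := h ▸ hle
          have : r 0 = R := by simp [hrdef]
          rw [this] at h0
          exact absurd hyR (not_lt.mpr h0)
        · exact h
      refine ⟨n₀ - 1, ?_, ?_⟩
      · have := Nat.find_min hex (m := n₀ - 1) (by omega)
        exact not_le.mp this
      · rw [not_lt]
        have heq : n₀ - 1 + 1 = n₀ := by omega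
        rw [heq]
        exact hle
  -- the pointwise integrand
  set F : Euc d → ℝ≥0∞ := fun y =>
    ENNReal.ofReal |Ω (x - y)| * ENNReal.ofReal |f y| *
      ENNReal.ofReal ((gaussMeasure d (ball x ‖x - y‖)).toReal ^ (β - 1)) with hFdef
  -- Step 0: the left-hand side is bounded by the lower integral of F over the ball
  have hLHSJ : ENNReal.ofReal |roughIfrac a β Ω f x| ≤
      ∫⁻ y in ball x R, F y ∂gaussMeasure d := by
    rw [roughIfrac, ← hRdef]
    calc ENNReal.ofReal |∫ y in ball x R,
          Ω (x - y) * f y * ((gaussMeasure d (ball x ‖x - y‖)).toReal) ^ (β - 1)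
            ∂gaussMeasure d|
        = ‖∫ y in ball x R,
            Ω (x - y) * f y * ((gaussMeasure d (ball x ‖x - y‖)).toReal) ^ (β - 1)
              ∂gaussMeasure d‖ₑ := (Real.enorm_eq_ofReal_abs _).symm
      _ ≤ ∫⁻ y in ball x R,
            ‖Ω (x - y) * f y * ((gaussMeasure d (ball x ‖x - y‖)).toReal) ^ (β - 1)‖ₑ
              ∂gaussMeasure d := enorm_integral_le_lintegral_enorm _
      _ = ∫⁻ y in ball x R, F y ∂gaussMeasure d := by
          apply lintegral_congr
          intro y
          rw [Real.enorm_eq_ofReal_abs, abs_mul, abs_mul,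
            abs_of_nonneg (Real.rpow_nonneg ENNReal.toReal_nonneg _),
            ENNReal.ofReal_mul (by positivity), ENNReal.ofReal_mul (abs_nonneg _), hFdef]
  -- Step 1: decompose the integral over annuli
  have hnull : gaussMeasure d {x} = 0 := by
    haveI : Nontrivial (Euc d) := ⟨⟨0, EuclideanSpace.single (⟨0, hd⟩ : Fin d) 1, by
      intro h
      have := congrArg (fun v : Euc d => v (⟨0, hd⟩ : Fin d)) h
      simp [EuclideanSpace.single_apply] at this⟩⟩
    rw [gaussMeasure]
    exact (withDensity_absolutelyContinuous volume _) (measure_singleton x)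
  have hJdec : ∫⁻ y in ball x R, F y ∂gaussMeasure d = ∑' k, ∫⁻ y in A k, F y ∂gaussMeasure d := by
    have hball : ball x R =ᵐ[gaussMeasure d] (⋃ k, A k) := by
      rw [hUnion]
      exact (diff_null_ae_eq_self hnull).symm
    rw [setLIntegral_congr hball, lintegral_iUnion hAm hAdisj]
  -- Step 2: the bound on each annulus
  have hJk : ∀ k, ∫⁻ y in A k, F y ∂gaussMeasure d ≤ g (k + 1) ^ (β - 1) * P k := by
    intro k
    calc ∫⁻ y in A k, F y ∂gaussMeasure d
        ≤ ∫⁻ y in A k, g (k + 1) ^ (β - 1) *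
            (ENNReal.ofReal |Ω (x - y)| * ENNReal.ofReal |f y|) ∂gaussMeasure d := by
          apply setLIntegral_mono' (hAm k)
          intro y hy
          have hd1 : r (k + 1) ≤ ‖x - y‖ := by
            have : ¬ dist y x < r (k + 1) := fun h => hy.2 (mem_ball.mpr h)
            rw [norm_sub_rev, ← dist_eq_norm]
            exact not_lt.mp this
          have hd2 : ‖x - y‖ ≤ r k := by
            rw [norm_sub_rev, ← dist_eq_norm]
            exact (mem_ball.mp hy.1).le
          set w : ℝ≥0∞ := gaussMeasure d (ball x ‖x - y‖) with hwdef
          have hw1 : g (k + 1) ≤ w := measure_mono (ball_subset_ball hd1)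
          have hw2 : w ≤ g k := measure_mono (ball_subset_ball hd2)
          have hw0 : w ≠ 0 := ((zero_lt_iff.mpr (hg0 (k + 1))).trans_le hw1).ne'
          have hwtop : w ≠ ⊤ := ne_top_of_le_ne_top (hgtop k) hw2
          have hofw : ENNReal.ofReal (w.toReal ^ (β - 1)) = w ^ (β - 1) := by
            rw [ENNReal.toReal_rpow, ENNReal.ofReal_toReal (rpow_ne_top' hw0 hwtop _)]
          calc F y = ENNReal.ofReal |Ω (x - y)| * ENNReal.ofReal |f y| * w ^ (β - 1) := by
                rw [hFdef]
                simp only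
                rw [hofw]
            _ ≤ ENNReal.ofReal |Ω (x - y)| * ENNReal.ofReal |f y| * g (k + 1) ^ (β - 1) :=
                mul_le_mul_right (rpow_anti (by linarith) hw1) _
            _ = g (k + 1) ^ (β - 1) * (ENNReal.ofReal |Ω (x - y)| * ENNReal.ofReal |f y|) := by
                ring
      _ = g (k + 1) ^ (β - 1) *
            ∫⁻ y in A k, ENNReal.ofReal |Ω (x - y)| * ENNReal.ofReal |f y| ∂gaussMeasure d :=
          lintegral_const_mul' _ _ (rpow_ne_top' (hg0 (k + 1)) (hgtop (k + 1)) _)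
      _ ≤ g (k + 1) ^ (β - 1) * P k := by
          apply mul_le_mul_right
          rw [hPdef]
          exact lintegral_mono_set (hAsub k)
  have hJsum : ENNReal.ofReal |roughIfrac a β Ω f x| ≤
      ∑' k, g (k + 1) ^ (β - 1) * P k := by
    calc ENNReal.ofReal |roughIfrac a β Ω f x| ≤ ∫⁻ y in ball x R, F y ∂gaussMeasure d := hLHSJ
      _ = ∑' k, ∫⁻ y in A k, F y ∂gaussMeasure d := hJdec
      _ ≤ ∑' k, g (k + 1) ^ (β - 1) * P k := ENNReal.tsum_le_tsum hJk
  set M₁ : ℝ≥0∞ := roughMax (2 * a) β₁ Ω f x with hM₁def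
  set M₂ : ℝ≥0∞ := roughMax (2 * a) β₂ Ω f x with hM₂def
  by_cases hz : M₁ = 0 ∨ M₂ = 0
  · -- degenerate case: the integrand vanishes a.e. on the ball
    have hP0 : P 0 = 0 := by
      rcases hz with h | h
      · have h0 : g 0 ^ (β₁ - 1) * P 0 = 0 := le_zero_iff.mp (h ▸ hPM β₁ 0)
        rcases mul_eq_zero.mp h0 with h' | h'
        · exact absurd h' (rpow_ne_zero' (hg0 0) (hgtop 0) _)
        · exact h'
      · have h0 : g 0 ^ (β₂ - 1) * P 0 = 0 := le_zero_iff.mp (h ▸ hPM β₂ 0)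
        rcases mul_eq_zero.mp h0 with h' | h'
        · exact absurd h' (rpow_ne_zero' (hg0 0) (hgtop 0) _)
        · exact h'
    have haemeas : AEMeasurable (fun y => ENNReal.ofReal |Ω (x - y)| * ENNReal.ofReal |f y|)
        ((gaussMeasure d).restrict (ball x (r 0))) := by
      refine AEMeasurable.mul (f := fun y => ENNReal.ofReal |Ω (x - y)|)
        (g := fun y => ENNReal.ofReal |f y|) ?_ ?_
      · exact ((hΩm.comp (measurable_const.sub measurable_id)).abs.ennreal_ofReal).aemeasurable
      · have h1 : AEMeasurable (fun y => ENNReal.ofReal |f y|) (gaussMeasure d) := by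
          have h2 := hf.aestronglyMeasurable.norm.aemeasurable.ennreal_ofReal
          simpa [Real.norm_eq_abs] using h2
        exact h1.restrict
    have hae : (fun y => ENNReal.ofReal |Ω (x - y)| * ENNReal.ofReal |f y|)
        =ᵐ[(gaussMeasure d).restrict (ball x (r 0))] 0 :=
      (lintegral_eq_zero_iff' haemeas).mp hP0
    have hr0 : r 0 = R := by simp [hrdef]
    have hJ0 : ∫⁻ y in ball x R, F y ∂gaussMeasure d = 0 := by
      rw [← hr0]
      have hFz : ∀ᵐ y ∂(gaussMeasure d).restrict (ball x (r 0)), F y = 0 := by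
        filter_upwards [hae] with y hy
        have hy' : ENNReal.ofReal |Ω (x - y)| * ENNReal.ofReal |f y| = 0 := hy
        rw [hFdef]
        simp only
        rw [hy', zero_mul]
      calc ∫⁻ y in ball x (r 0), F y ∂gaussMeasure d
          = ∫⁻ _ in ball x (r 0), 0 ∂gaussMeasure d := lintegral_congr_ae hFz
        _ = 0 := lintegral_zero
    exact le_trans (le_trans hLHSJ (le_of_eq hJ0)) zero_le
  push_neg at hz
  obtain ⟨hM₁0, hM₂0⟩ := hz
  have hθ1 : 0 < (β₂ - β) / (β₂ - β₁) := div_pos (by linarith) (by linarith)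
  have hθ2 : 0 < (β - β₁) / (β₂ - β₁) := div_pos (by linarith) (by linarith)
  by_cases htop : M₁ = ⊤ ∨ M₂ = ⊤
  · -- one of the maximal functions is infinite: the right-hand side is infinite
    have hRHS : Dm * Cq * M₁ ^ ((β₂ - β) / (β₂ - β₁)) * M₂ ^ ((β - β₁) / (β₂ - β₁)) = ⊤ := by
      rcases htop with h | h
      · have hne : M₂ ^ ((β - β₁) / (β₂ - β₁)) ≠ 0 := by
          intro hc
          rcases ENNReal.rpow_eq_zero_iff.mp hc with ⟨h0, _⟩ | ⟨_, hneg⟩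
          · exact hM₂0 h0
          · linarith
        rw [h, ENNReal.top_rpow_of_pos hθ1, ENNReal.mul_top hC0, ENNReal.top_mul hne]
      · have hne1 : Dm * Cq * M₁ ^ ((β₂ - β) / (β₂ - β₁)) ≠ 0 := by
          apply mul_ne_zero hC0
          intro hc
          rcases ENNReal.rpow_eq_zero_iff.mp hc with ⟨h0, _⟩ | ⟨_, hneg⟩
          · exact hM₁0 h0
          · linarith
        rw [h, ENNReal.top_rpow_of_pos hθ2, ENNReal.mul_top hne1]
    exact hRHS ▸ le_top
  push_neg at htop
  obtain ⟨hM₁top, hM₂top⟩ := htop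
  -- the balancing threshold
  have hs'pos : (0:ℝ) < β₂ - β₁ := by linarith
  have hdiv0 : M₂ / M₁ ≠ 0 := by
    simp only [div_eq_mul_inv]
    exact mul_ne_zero hM₂0 (ENNReal.inv_ne_zero.mpr hM₁top)
  have hdivtop : M₂ / M₁ ≠ ⊤ := by
    simp only [div_eq_mul_inv]
    exact ENNReal.mul_ne_top hM₂top (ENNReal.inv_ne_top.mpr hM₁0)
  set T : ℝ≥0∞ := (M₂ / M₁) ^ (β₂ - β₁)⁻¹ with hTdef
  have hT0 : T ≠ 0 := rpow_ne_zero' hdiv0 hdivtop _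
  have hTtop : T ≠ ⊤ := rpow_ne_top' hdiv0 hdivtop _
  set u₀ : ℝ≥0∞ := c * T⁻¹ with hu₀def
  have hu₀0 : u₀ ≠ 0 := mul_ne_zero hc0 (ENNReal.inv_ne_zero.mpr hTtop)
  have hu₀top : u₀ ≠ ⊤ := ENNReal.mul_ne_top hctop (ENNReal.inv_ne_top.mpr hT0)
  have hcu : ∀ k : ℕ, c * q ^ k = (u₀ * q ^ k) * T := by
    intro k
    rw [hu₀def]
    calc c * q ^ k = c * q ^ k * (T⁻¹ * T) := by
          rw [ENNReal.inv_mul_cancel hT0 hTtop, mul_one]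
      _ = c * T⁻¹ * q ^ k * T := by ring
  have hTs : T ^ (β₂ - β₁) = M₂ / M₁ := by
    rw [hTdef, ← ENNReal.rpow_mul, inv_mul_cancel₀ hs'pos.ne', ENNReal.rpow_one]
  have hG : T ^ (-(β₂ - β)) * M₂ = T ^ (β - β₁) * M₁ := by
    calc T ^ (-(β₂ - β)) * M₂ = T ^ (-(β₂ - β)) * ((M₂ / M₁) * M₁) := by
          rw [ENNReal.div_mul_cancel hM₁0 hM₁top]
      _ = T ^ (-(β₂ - β)) * (T ^ (β₂ - β₁) * M₁) := by rw [hTs]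
      _ = (T ^ (-(β₂ - β)) * T ^ (β₂ - β₁)) * M₁ := by ring
      _ = T ^ (β - β₁) * M₁ := by
          rw [← ENNReal.rpow_add _ _ hT0 hTtop]
          congr 2
          ring
  set G : ℝ≥0∞ := T ^ (β - β₁) * M₁ with hGdef
  -- the bound on each term via the two maximal functions
  have hb1 : ∀ k, g (k + 1) ^ (β - 1) * P k ≤ D₁ * ((c * q ^ k) ^ (β - β₁) * M₁) := by
    intro k
    have hcq0 : (c * q ^ k) ≠ 0 := mul_ne_zero hc0 (pow_ne_zero _ hq0)
    have hcqtop : (c * q ^ k) ≠ ⊤ := ENNReal.mul_ne_top hctop (ENNReal.pow_ne_top hqtop)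
    calc g (k + 1) ^ (β - 1) * P k ≤ g (k + 1) ^ (β - 1) * (g k ^ (1 - β₁) * M₁) :=
          mul_le_mul_right (hPle β₁ k) _
      _ ≤ (K₁ * (c * q ^ (k + 1))) ^ (β - 1) * ((K₂ * (c * q ^ k)) ^ (1 - β₁) * M₁) := by
          apply mul_le_mul' (rpow_anti (by linarith) (hgL (k + 1)))
          apply mul_le_mul_left
          exact ENNReal.rpow_le_rpow (hgU k) (by linarith)
      _ = D₁ * ((c * q ^ k) ^ (β - β₁) * M₁) := by
          have e1 : K₁ * (c * q ^ (k + 1)) = (K₁ * q) * (c * q ^ k) := by ring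
          have e2 : (c * q ^ k) ^ (β - 1) * (c * q ^ k) ^ (1 - β₁) = (c * q ^ k) ^ (β - β₁) := by
            rw [← ENNReal.rpow_add _ _ hcq0 hcqtop]
            congr 1
            ring
          rw [e1, ENNReal.mul_rpow_of_ne_top (ENNReal.mul_ne_top hK₁top hqtop) hcqtop,
            ENNReal.mul_rpow_of_nonneg _ _ (by linarith : (0:ℝ) ≤ 1 - β₁), hD₁def, ← e2]
          ring
  have hb2 : ∀ k, g (k + 1) ^ (β - 1) * P k ≤ D₂ * ((c * q ^ k) ^ (-(β₂ - β)) * M₂) := by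
    intro k
    have hcq0 : (c * q ^ k) ≠ 0 := mul_ne_zero hc0 (pow_ne_zero _ hq0)
    have hcqtop : (c * q ^ k) ≠ ⊤ := ENNReal.mul_ne_top hctop (ENNReal.pow_ne_top hqtop)
    calc g (k + 1) ^ (β - 1) * P k ≤ g (k + 1) ^ (β - 1) * (g k ^ (1 - β₂) * M₂) :=
          mul_le_mul_right (hPle β₂ k) _
      _ ≤ (K₁ * (c * q ^ (k + 1))) ^ (β - 1) * ((K₂ * (c * q ^ k)) ^ (1 - β₂) * M₂) := by
          apply mul_le_mul' (rpow_anti (by linarith) (hgL (k + 1)))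
          apply mul_le_mul_left
          exact ENNReal.rpow_le_rpow (hgU k) (by linarith)
      _ = D₂ * ((c * q ^ k) ^ (-(β₂ - β)) * M₂) := by
          have e1 : K₁ * (c * q ^ (k + 1)) = (K₁ * q) * (c * q ^ k) := by ring
          have e2 : (c * q ^ k) ^ (β - 1) * (c * q ^ k) ^ (1 - β₂) = (c * q ^ k) ^ (-(β₂ - β)) := by
            rw [← ENNReal.rpow_add _ _ hcq0 hcqtop]
            congr 1
            ring
          rw [e1, ENNReal.mul_rpow_of_ne_top (ENNReal.mul_ne_top hK₁top hqtop) hcqtop,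
            ENNReal.mul_rpow_of_nonneg _ _ (by linarith : (0:ℝ) ≤ 1 - β₂), hD₂def, ← e2]
          ring
  have hmm : ∀ X Y : ℝ≥0∞, min (Dm * X) (Dm * Y) = Dm * min X Y := by
    intro X Y
    rw [mul_comm Dm X, mul_comm Dm Y, enn_min_mul, mul_comm]
  have hfinal : ∑' k, g (k + 1) ^ (β - 1) * P k ≤ Dm * Cq * G := by
    calc ∑' k, g (k + 1) ^ (β - 1) * P k
        ≤ ∑' k, Dm * min ((c * q ^ k) ^ (β - β₁) * M₁) ((c * q ^ k) ^ (-(β₂ - β)) * M₂) := by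
          apply ENNReal.tsum_le_tsum
          intro k
          rw [← hmm]
          exact le_min ((hb1 k).trans (mul_le_mul_left (le_max_left _ _) _))
            ((hb2 k).trans (mul_le_mul_left (le_max_right _ _) _))
      _ = Dm * ∑' k, min ((c * q ^ k) ^ (β - β₁) * M₁) ((c * q ^ k) ^ (-(β₂ - β)) * M₂) :=
          ENNReal.tsum_mul_left
      _ = Dm * ∑' k, min ((u₀ * q ^ k) ^ (β - β₁)) ((u₀ * q ^ k) ^ (-(β₂ - β))) * G := by
          congr 1
          apply tsum_congr
          intro k
          have huqtop : u₀ * q ^ k ≠ ⊤ := ENNReal.mul_ne_top hu₀top (ENNReal.pow_ne_top hqtop)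
          rw [hcu k, ENNReal.mul_rpow_of_ne_top huqtop hTtop,
            ENNReal.mul_rpow_of_ne_top huqtop hTtop,
            mul_assoc ((u₀ * q ^ k) ^ (β - β₁)) _ M₁,
            mul_assoc ((u₀ * q ^ k) ^ (-(β₂ - β))) _ M₂, hG, ← hGdef, enn_min_mul]
      _ = Dm * ((∑' k, min ((u₀ * q ^ k) ^ (β - β₁)) ((u₀ * q ^ k) ^ (-(β₂ - β)))) * G) := by
          rw [ENNReal.tsum_mul_right]
      _ ≤ Dm * (Cq * G) := by
          have hsm := sum_min_geom q hq0 hq1 u₀ hu₀0 hu₀top (β - β₁) (β₂ - β)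
            (by linarith) (by linarith)
          exact mul_le_mul_right (mul_le_mul_left (hsm.trans_eq hCqdef.symm) G) Dm
      _ = Dm * Cq * G := (mul_assoc _ _ _).symm
  -- identify G with the interpolated bound
  have hGval : G = M₁ ^ ((β₂ - β) / (β₂ - β₁)) * M₂ ^ ((β - β₁) / (β₂ - β₁)) := by
    have hTα : T ^ (β - β₁) =
        M₂ ^ ((β - β₁) / (β₂ - β₁)) / M₁ ^ ((β - β₁) / (β₂ - β₁)) := by
      rw [hTdef, ← ENNReal.rpow_mul,
        show (β₂ - β₁)⁻¹ * (β - β₁) = (β - β₁) / (β₂ - β₁) by ring,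
        ENNReal.div_rpow_of_nonneg _ _ (by positivity)]
    have key : M₁ ^ (1:ℝ) * M₁ ^ (-((β - β₁) / (β₂ - β₁))) = M₁ ^ ((β₂ - β) / (β₂ - β₁)) := by
      rw [← ENNReal.rpow_add _ _ hM₁0 hM₁top]
      congr 1
      field_simp
      ring
    calc G = M₂ ^ ((β - β₁) / (β₂ - β₁)) / M₁ ^ ((β - β₁) / (β₂ - β₁)) * M₁ := by
          rw [hGdef, hTα]
      _ = M₂ ^ ((β - β₁) / (β₂ - β₁)) * (M₁ ^ (1:ℝ) * M₁ ^ (-((β - β₁) / (β₂ - β₁)))) := by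
          rw [ENNReal.rpow_one, div_eq_mul_inv, ← ENNReal.rpow_neg]
          ring
      _ = M₂ ^ ((β - β₁) / (β₂ - β₁)) * M₁ ^ ((β₂ - β) / (β₂ - β₁)) := by rw [key]
      _ = M₁ ^ ((β₂ - β) / (β₂ - β₁)) * M₂ ^ ((β - β₁) / (β₂ - β₁)) := mul_comm _ _
  calc ENNReal.ofReal |roughIfrac a β Ω f x| ≤ ∑' k, g (k + 1) ^ (β - 1) * P k := hJsum
    _ ≤ Dm * Cq * G := hfinal
    _ = Dm * Cq * M₁ ^ ((β₂ - β) / (β₂ - β₁)) * M₂ ^ ((β - β₁) / (β₂ - β₁)) := by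
        rw [hGval]
        ring
end
end
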